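/- arXiv:1711.08986 — 3 statements merged into one kernel-verified Lean document; each statement's English description precedes it below -/
import Mathlib

section
/- Let (g,s) be a signed excursion with the intervals [a_i,c_i] and their shuffled versions [a'_i,c'_i] (with midpoints b_i, b'_i). If [a_j,c_j] ⊆ (a_i,b_i), then s_i = ⊕ implies [a'_j,c'_j] ⊆ [a'_i,b'_i] and s_i = ⊖ implies [a'_j,c'_j] ⊆ [b'_i,c'_i]; if [a_j,c_j] ⊆ (b_i,c_i), then s_i = ⊕ implies [a'_j,c'_j] ⊆ [b'_i,c'_i] and s_i = ⊖ implies [a'_j,c'_j] ⊆ [a'_i,b'_i]. -/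
open MeasureTheory Set

noncomputable section

/-- `x` is not a one-sided minimum of `g`. -/
def NotOneSidedMin (g : ℝ → ℝ) (x : ℝ) : Prop :=
  x ∈ Set.Ioo (0:ℝ) 1 ∧ ∀ ε > 0, (∃ x₁ ∈ Set.Ioo (x-ε) x, g x₁ < g x) ∧
    (∃ x₂ ∈ Set.Ioo x (x+ε), g x₂ < g x)

/-- `b` is an inner local minimum of `g`. -/
def IsInnerLocalMin (g : ℝ → ℝ) (b : ℝ) : Prop :=
  b ∈ Set.Ioo (0:ℝ) 1 ∧ ∃ ε > 0, ∀ x ∈ Set.Ioo (b-ε) (b+ε), g b ≤ g x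

/-- `b` is a strict (inner) local minimum of `g`. -/
def IsStrictLocalMin (g : ℝ → ℝ) (b : ℝ) : Prop :=
  b ∈ Set.Ioo (0:ℝ) 1 ∧ ∃ ε > 0, ∀ x ∈ Set.Ioo (b-ε) (b+ε), x ≠ b → g b < g x

/-- A CRT excursion. -/
structure IsCRT (g : ℝ → ℝ) : Prop where
  cont : ContinuousOn g (Set.Icc 0 1)
  nonneg : ∀ t ∈ Set.Icc (0:ℝ) 1, 0 ≤ g t
  pos : ∀ t ∈ Set.Ioo (0:ℝ) 1, 0 < g t
  zero0 : g 0 = 0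
  zero1 : g 1 = 0
  dense_min : ∀ x ∈ Set.Icc (0:ℝ) 1, x ∈ closure {b | IsInnerLocalMin g b}
  distinct : ∀ b b', IsInnerLocalMin g b → IsInnerLocalMin g b' → g b = g b' → b = b'
  leaves_full : volume {x | NotOneSidedMin g x} = 1

/-- `β` is the unique minimum point of `g` on `[x,y]`, lies in `(x,y)`,
and is a strict local minimum: the most recent common ancestor of `x < y`. -/
def IsMrca (g : ℝ → ℝ) (β x y : ℝ) : Prop :=
  x < y ∧ β ∈ Set.Ioo x y ∧ IsStrictLocalMin g β ∧
    (∀ t ∈ Set.Icc x y, g β ≤ g t) ∧ (∀ t ∈ Set.Icc x y, g t = g β → t = β)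

/-- `x` and `y` are `g`-comparable. -/
def GComparable (g : ℝ → ℝ) (x y : ℝ) : Prop :=
  ∃ β, IsMrca g β (min x y) (max x y)

/-- `b` enumerates (injectively) the strict local minima of `g`. -/
def IsEnum (g : ℝ → ℝ) (b : ℕ → ℝ) : Prop :=
  Function.Injective b ∧ ∀ β, IsStrictLocalMin g β ↔ ∃ i, b i = β

/-- The sign-shuffled comparison relation `u ⊲ v` : if the mrca of `u,v` carries
sign `⊕` (`true`) then the smaller goes first, otherwise the bigger goes first. -/
def Tri (g : ℝ → ℝ) (b : ℕ → ℝ) (s : ℕ → Bool) (u v : ℝ) : Prop :=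
  ∃ i, (IsMrca g (b i) u v ∧ s i = true) ∨ (IsMrca g (b i) v u ∧ s i = false)

/-- The measure-preserving function `φ_{g,s}`. -/
def phi (g : ℝ → ℝ) (b : ℕ → ℝ) (s : ℕ → Bool) (t : ℝ) : ℝ :=
  (volume {u ∈ Set.Icc (0:ℝ) 1 | Tri g b s u t}).toReal

def aPt (g : ℝ → ℝ) (β : ℝ) : ℝ := sSup {t | t < β ∧ g t = g β}
def cPt (g : ℝ → ℝ) (β : ℝ) : ℝ := sInf {t | β < t ∧ g t = g β}

def aI (g : ℝ → ℝ) (b : ℕ → ℝ) (i : ℕ) : ℝ := aPt g (b i)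
def cI (g : ℝ → ℝ) (b : ℕ → ℝ) (i : ℕ) : ℝ := cPt g (b i)
def aI' (g : ℝ → ℝ) (b : ℕ → ℝ) (s : ℕ → Bool) (i : ℕ) : ℝ := phi g b s (aI g b i)
def cI' (g : ℝ → ℝ) (b : ℕ → ℝ) (s : ℕ → Bool) (i : ℕ) : ℝ :=
  aI' g b s i + (cI g b i - aI g b i)
def bI' (g : ℝ → ℝ) (b : ℕ → ℝ) (s : ℕ → Bool) (i : ℕ) : ℝ :=
  aI' g b s i + (if s i then b i - aI g b i else cI g b i - b i)

/-- The permuton `μ_{g,s} = (Id, φ_{g,s})_* Leb`. -/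
def permuton (g : ℝ → ℝ) (b : ℕ → ℝ) (s : ℕ → Bool) : Measure (ℝ × ℝ) :=
  Measure.map (fun t => (t, phi g b s t)) (volume.restrict (Set.Icc 0 1))

/-- Property (A) of a signed excursion. -/
def PropA (g : ℝ → ℝ) (b : ℕ → ℝ) (s : ℕ → Bool) : Prop :=
  ∀ i j, i ≠ j →
    Set.Icc (aI' g b s j) (cI' g b s j) ⊆ Set.Icc (aI' g b s i) (cI' g b s i) →
    (∀ y ∈ Set.Icc (g (b i)) (g (b j)),
      y ∈ closure {h | ∃ l, h = g (b l) ∧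
        Set.Icc (aI' g b s l) (cI' g b s l) ⊆ Set.Icc (aI' g b s i) (cI' g b s i) ∧
        Set.Icc (aI' g b s j) (cI' g b s j) ⊆ Set.Icc (bI' g b s l) (cI' g b s l)}) ∧
    (∀ y ∈ Set.Icc (g (b i)) (g (b j)),
      y ∈ closure {h | ∃ l, h = g (b l) ∧
        Set.Icc (aI' g b s l) (cI' g b s l) ⊆ Set.Icc (aI' g b s i) (cI' g b s i) ∧
        Set.Icc (aI' g b s j) (cI' g b s j) ⊆ Set.Icc (aI' g b s l) (bI' g b s l)})

/-- The shuffled excursion `f_{g,s}`. -/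
def fShuffle (g : ℝ → ℝ) (b : ℕ → ℝ) (s : ℕ → Bool) (t : ℝ) : ℝ :=
  ⨆ i, Set.indicator (Set.Icc (aI' g b s i) (cI' g b s i)) (fun _ => g (b i)) t

/-- Topological support of a measure. -/
def mSupport {α : Type*} [TopologicalSpace α] [MeasurableSpace α] (μ : Measure α) : Set α :=
  {x | ∀ U : Set α, IsOpen U → x ∈ U → μ U ≠ 0}

namespace CRTstmt5

variable {g : ℝ → ℝ} {b : ℕ → ℝ} {s : ℕ → Bool}

lemma strict_inner {β : ℝ} (h : IsStrictLocalMin g β) : IsInnerLocalMin g β := by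
  obtain ⟨h1, ε, hε, h2⟩ := h
  refine ⟨h1, ε, hε, fun x hx => ?_⟩
  by_cases hxb : x = β
  · simp [hxb]
  · exact (h2 x hx hxb).le

lemma strict_eq (hg : IsCRT g) {x y : ℝ} (h1 : IsStrictLocalMin g x)
    (h2 : IsStrictLocalMin g y) (hxy : g x = g y) : x = y :=
  hg.distinct _ _ (strict_inner h1) (strict_inner h2) hxy

structure Good (g : ℝ → ℝ) (α β γ : ℝ) : Prop where
  hα : 0 < α
  hαβ : α < β
  hβγ : β < γ
  hγ : γ < 1
  gα : g α = g β
  gγ : g γ = g β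
  strict : IsStrictLocalMin g β
  mid1 : ∀ t, α < t → t < β → g β < g t
  mid2 : ∀ t, β < t → t < γ → g β < g t

lemma Good.min {α β γ : ℝ} (G : Good g α β γ) : ∀ t ∈ Icc α γ, g β ≤ g t := by
  rintro t ⟨h1, h2⟩
  rcases lt_trichotomy t β with h | h | h
  · rcases eq_or_lt_of_le h1 with rfl | h1
    · exact G.gα.ge
    · exact (G.mid1 t h1 h).le
  · exact h ▸ le_rfl
  · rcases eq_or_lt_of_le h2 with rfl | h2
    · exact G.gγ.ge
    · exact (G.mid2 t h h2).le

lemma Good.eqc {α β γ : ℝ} (G : Good g α β γ) :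
    ∀ t ∈ Icc α γ, g t = g β → t = α ∨ t = β ∨ t = γ := by
  rintro t ⟨h1, h2⟩ ht
  rcases lt_trichotomy t β with h | h | h
  · rcases eq_or_lt_of_le h1 with rfl | h1
    · exact Or.inl rfl
    · exact absurd ht (ne_of_gt (G.mid1 t h1 h))
  · exact Or.inr (Or.inl h)
  · rcases eq_or_lt_of_le h2 with rfl | h2
    · exact Or.inr (Or.inr rfl)
    · exact absurd ht (ne_of_gt (G.mid2 t h h2))

lemma Good.not_strict_a (hg : IsCRT g) {α β γ : ℝ} (G : Good g α β γ) :
    ¬ IsStrictLocalMin g α :=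
  fun h => absurd (strict_eq hg h G.strict G.gα) (ne_of_lt G.hαβ)

lemma Good.not_strict_c (hg : IsCRT g) {α β γ : ℝ} (G : Good g α β γ) :
    ¬ IsStrictLocalMin g γ :=
  fun h => absurd (strict_eq hg h G.strict G.gγ) (ne_of_gt G.hβγ)

lemma good_of (hg : IsCRT g) {β : ℝ} (hβ : IsStrictLocalMin g β) :
    Good g (aPt g β) β (cPt g β) := by
  obtain ⟨⟨hβ0, hβ1⟩, ε₀, hε₀, hloc⟩ := hβ
  have hstrict : IsStrictLocalMin g β := ⟨⟨hβ0, hβ1⟩, ε₀, hε₀, hloc⟩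
  set δ := min ε₀ (min β (1 - β)) with hδdef
  have hδ : 0 < δ := lt_min hε₀ (lt_min hβ0 (by linarith))
  have hδε : δ ≤ ε₀ := min_le_left _ _
  have hδβ : δ ≤ β := le_trans (min_le_right _ _) (min_le_left _ _)
  have hδ1 : δ ≤ 1 - β := le_trans (min_le_right _ _) (min_le_right _ _)
  have hgβpos : 0 < g β := hg.pos β ⟨hβ0, hβ1⟩
  have hloc' : ∀ x, β - δ < x → x < β + δ → x ≠ β → g β < g x := by
    intro x h1 h2 h3
    exact hloc x ⟨by linarith, by linarith⟩ h3
  have hcont : ContinuousOn g (Icc 0 1) := hg.cont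
  -- left side
  have hc1 : ContinuousOn g (Icc 0 (β - δ/2)) :=
    hcont.mono (Icc_subset_Icc le_rfl (by linarith))
  obtain ⟨t₀, ht₀mem, ht₀⟩ := intermediate_value_Icc (by linarith : (0:ℝ) ≤ β - δ/2) hc1
    ⟨by rw [hg.zero0]; exact hgβpos.le,
     (hloc' _ (by linarith) (by linarith) (by linarith)).le⟩
  have ht₀pos : 0 < t₀ := by
    rcases eq_or_lt_of_le ht₀mem.1 with h | h
    · exfalso; rw [← h, hg.zero0] at ht₀; linarith
    · exact h
  set S := {t | t < β ∧ g t = g β} with hSdef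
  have ht₀S : t₀ ∈ S := ⟨by linarith [ht₀mem.2], ht₀⟩
  have hSne : S.Nonempty := ⟨t₀, ht₀S⟩
  have hSub : ∀ t ∈ S, t ≤ β - δ := by
    rintro t ⟨ht1, ht2⟩
    by_contra h
    push_neg at h
    exact absurd ht2 (ne_of_gt (hloc' t (by linarith) (by linarith) (ne_of_lt ht1)))
  have hbdd : BddAbove S := ⟨β - δ, hSub⟩
  have haeq : aPt g β = sSup S := rfl
  set α := sSup S with hαdef
  have ht₀α : t₀ ≤ α := le_csSup hbdd ht₀S
  have hαub : α ≤ β - δ := csSup_le hSne hSub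
  have hα0 : 0 < α := lt_of_lt_of_le ht₀pos ht₀α
  have hgα : g α = g β := by
    have hcl : α ∈ closure (S ∩ Ioi 0) := by
      rw [Metric.mem_closure_iff]
      intro η hη
      have hmin : 0 < min η α := lt_min hη hα0
      obtain ⟨t, htS, ht⟩ := exists_lt_of_lt_csSup hSne
        (show α - min η α < sSup S by rw [← hαdef]; linarith)
      have htα : t ≤ α := le_csSup hbdd htS
      have htpos : 0 < t := by
        have := min_le_right η α
        linarith
      refine ⟨t, ⟨htS, htpos⟩, ?_⟩
      rw [Real.dist_eq, abs_of_nonneg (by linarith)]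
      have := min_le_left η α
      linarith
    have hsub : S ∩ Ioi 0 ⊆ Icc 0 1 := by
      rintro t ⟨htS, ht0⟩
      exact ⟨le_of_lt ht0, by linarith [hSub t htS]⟩
    have hcw : ContinuousWithinAt g (S ∩ Ioi 0) α :=
      (hcont α ⟨hα0.le, by linarith⟩).mono hsub
    have hmem := hcw.mem_closure_image hcl
    have himg : g '' (S ∩ Ioi 0) ⊆ {g β} := by
      rintro _ ⟨t, ⟨⟨_, ht⟩, _⟩, rfl⟩
      exact ht
    have : g α ∈ closure ({g β} : Set ℝ) := closure_mono himg hmem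
    rwa [closure_singleton, mem_singleton_iff] at this
  have hmid1 : ∀ t, α < t → t < β → g β < g t := by
    intro t h1 h2
    have hne : g t ≠ g β := fun h => absurd (le_csSup hbdd ⟨h2, h⟩) (not_le.mpr h1)
    rcases lt_or_ge (β - δ) t with h3 | h3
    · exact hloc' t h3 (by linarith) (ne_of_lt h2)
    · rcases lt_or_ge (g β) (g t) with h4 | h4
      · exact h4
      exfalso
      have hlt : g t < g β := lt_of_le_of_ne h4 hne
      have hc2 : ContinuousOn g (Icc t (β - δ/2)) :=
        hcont.mono (Icc_subset_Icc (by linarith) (by linarith))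
      obtain ⟨t', ht'mem, ht'⟩ := intermediate_value_Icc (by linarith : t ≤ β - δ/2) hc2
        ⟨hlt.le, (hloc' _ (by linarith) (by linarith) (by linarith)).le⟩
      have ht'S : t' ∈ S := ⟨by linarith [ht'mem.2], ht'⟩
      have := le_csSup hbdd ht'S
      have := ht'mem.1
      linarith
  -- right side
  have hc1' : ContinuousOn g (Icc (β + δ/2) 1) :=
    hcont.mono (Icc_subset_Icc (by linarith) le_rfl)
  obtain ⟨t₁, ht₁mem, ht₁⟩ := intermediate_value_Icc' (by linarith : β + δ/2 ≤ 1) hc1'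
    ⟨by rw [hg.zero1]; exact hgβpos.le,
     (hloc' _ (by linarith) (by linarith) (by linarith)).le⟩
  have ht₁lt1 : t₁ < 1 := by
    rcases eq_or_lt_of_le ht₁mem.2 with h | h
    · exfalso; rw [h, hg.zero1] at ht₁; linarith
    · exact h
  set S' := {t | β < t ∧ g t = g β} with hS'def
  have ht₁S : t₁ ∈ S' := ⟨by linarith [ht₁mem.1], ht₁⟩
  have hS'ne : S'.Nonempty := ⟨t₁, ht₁S⟩
  have hS'lb : ∀ t ∈ S', β + δ ≤ t := by
    rintro t ⟨ht1, ht2⟩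
    by_contra h
    push_neg at h
    exact absurd ht2 (ne_of_gt (hloc' t (by linarith) (by linarith) (ne_of_gt ht1)))
  have hbdd' : BddBelow S' := ⟨β + δ, hS'lb⟩
  have hceq : cPt g β = sInf S' := rfl
  set γ := sInf S' with hγdef
  have ht₁γ : γ ≤ t₁ := csInf_le hbdd' ht₁S
  have hγlb : β + δ ≤ γ := le_csInf hS'ne hS'lb
  have hγ1 : γ < 1 := lt_of_le_of_lt ht₁γ ht₁lt1
  have hgγ : g γ = g β := by
    have hcl : γ ∈ closure (S' ∩ Iio 1) := by
      rw [Metric.mem_closure_iff]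
      intro η hη
      have hmin : 0 < min η (1 - γ) := lt_min hη (by linarith)
      obtain ⟨t, htS, ht⟩ := exists_lt_of_csInf_lt hS'ne
        (show sInf S' < γ + min η (1 - γ) by rw [← hγdef]; linarith)
      have htγ : γ ≤ t := csInf_le hbdd' htS
      have htlt1 : t < 1 := by
        have := min_le_right η (1 - γ)
        linarith
      refine ⟨t, ⟨htS, htlt1⟩, ?_⟩
      rw [Real.dist_eq, abs_of_nonpos (by linarith)]
      have := min_le_left η (1 - γ)
      linarith
    have hsub : S' ∩ Iio 1 ⊆ Icc 0 1 := by
      rintro t ⟨htS, ht1⟩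
      exact ⟨by linarith [hS'lb t htS], le_of_lt ht1⟩
    have hcw : ContinuousWithinAt g (S' ∩ Iio 1) γ :=
      (hcont γ ⟨by linarith, hγ1.le⟩).mono hsub
    have hmem := hcw.mem_closure_image hcl
    have himg : g '' (S' ∩ Iio 1) ⊆ {g β} := by
      rintro _ ⟨t, ⟨⟨_, ht⟩, _⟩, rfl⟩
      exact ht
    have : g γ ∈ closure ({g β} : Set ℝ) := closure_mono himg hmem
    rwa [closure_singleton, mem_singleton_iff] at this
  have hmid2 : ∀ t, β < t → t < γ → g β < g t := by
    intro t h1 h2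
    have hne : g t ≠ g β := fun h => absurd (csInf_le hbdd' ⟨h1, h⟩) (not_le.mpr h2)
    rcases lt_or_ge t (β + δ) with h3 | h3
    · exact hloc' t (by linarith) h3 (ne_of_gt h1)
    · rcases lt_or_ge (g β) (g t) with h4 | h4
      · exact h4
      exfalso
      have hlt : g t < g β := lt_of_le_of_ne h4 hne
      have hc2 : ContinuousOn g (Icc (β + δ/2) t) :=
        hcont.mono (Icc_subset_Icc (by linarith) (by linarith))
      obtain ⟨t', ht'mem, ht'⟩ := intermediate_value_Icc' (by linarith : β + δ/2 ≤ t) hc2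
        ⟨hlt.le, (hloc' _ (by linarith) (by linarith) (by linarith)).le⟩
      have ht'S : t' ∈ S' := ⟨by linarith [ht'mem.1], ht'⟩
      have := csInf_le hbdd' ht'S
      have := ht'mem.2
      linarith
  rw [haeq, hceq]
  exact ⟨hα0, by linarith, by linarith, hγ1, hgα, hgγ, hstrict, hmid1, hmid2⟩

lemma good_i (hg : IsCRT g) (hb : IsEnum g b) (i : ℕ) :
    Good g (aI g b i) (b i) (cI g b i) :=
  good_of hg ((hb.2 (b i)).mpr ⟨i, rfl⟩)

section Mrca
variable {g : ℝ → ℝ} {b : ℕ → ℝ} {s : ℕ → Bool} {αi βi γi αj βj γj : ℝ}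

/-- transfer of mrca's for `u` to the left of the interval -/
lemma mrca_left (hg : IsCRT g) (Gi : Good g αi βi γi) (hj1 : αi < αj) (hj2 : αj < γi)
    {u β' : ℝ} (hu : u < αi) : IsMrca g β' u αi ↔ IsMrca g β' u αj := by
  constructor
  · rintro ⟨hlt, hmem, hstr, hmin, huniq⟩
    have h1 : g β' ≤ g βi := Gi.gα ▸ hmin αi ⟨hu.le, le_rfl⟩
    have h2 : g β' < g βi := by
      rcases eq_or_lt_of_le h1 with h | h
      · exfalso
        have := huniq αi ⟨hu.le, le_rfl⟩ (by rw [Gi.gα, h])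
        exact absurd (this ▸ hmem.2) (lt_irrefl β')
      · exact h
    refine ⟨by linarith, ⟨hmem.1, by linarith [hmem.2]⟩, hstr, ?_, ?_⟩
    · rintro t ⟨ht1, ht2⟩
      rcases le_or_gt t αi with h | h
      · exact hmin t ⟨ht1, h⟩
      · exact le_trans h2.le (Gi.min t ⟨h.le, by linarith⟩)
    · rintro t ⟨ht1, ht2⟩ ht
      rcases le_or_gt t αi with h | h
      · exact huniq t ⟨ht1, h⟩ ht
      · exfalso
        have := Gi.min t ⟨h.le, by linarith⟩
        rw [ht] at this
        linarith
  · rintro ⟨hlt, hmem, hstr, hmin, huniq⟩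
    have h1 : g β' ≤ g βi := Gi.gα ▸ hmin αi ⟨hu.le, by linarith⟩
    have hβ'αi : β' < αi := by
      by_contra h
      push_neg at h
      have h2 : g βi ≤ g β' := Gi.min β' ⟨h, by linarith [hmem.2]⟩
      have h3 : g β' = g βi := le_antisymm h1 h2
      have h4 := huniq αi ⟨hu.le, by linarith⟩ (by rw [Gi.gα, h3])
      exact Gi.not_strict_a hg (h4 ▸ hstr)
    refine ⟨hu, ⟨hmem.1, hβ'αi⟩, hstr, ?_, ?_⟩
    · rintro t ⟨ht1, ht2⟩
      exact hmin t ⟨ht1, by linarith⟩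
    · rintro t ⟨ht1, ht2⟩ ht
      exact huniq t ⟨ht1, by linarith⟩ ht

/-- transfer of mrca's for `u` to the right of the interval -/
lemma mrca_right (hg : IsCRT g) (Gi : Good g αi βi γi) (hj1 : αi < αj) (hj2 : αj < γi)
    {u β' : ℝ} (hu : γi < u) : IsMrca g β' αi u ↔ IsMrca g β' αj u := by
  constructor
  · rintro ⟨hlt, hmem, hstr, hmin, huniq⟩
    have h1 : g β' ≤ g βi := Gi.gα ▸ hmin αi ⟨le_rfl, hlt.le⟩
    have h2 : g β' < g βi := by
      rcases eq_or_lt_of_le h1 with h | h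
      · exfalso
        have := huniq αi ⟨le_rfl, hlt.le⟩ (by rw [Gi.gα, h])
        exact absurd (this ▸ hmem.1) (lt_irrefl β')
      · exact h
    have hβ'γi : γi < β' := by
      rcases le_or_gt β' γi with h | h
      · exfalso
        have := Gi.min β' ⟨hmem.1.le, h⟩
        linarith
      · exact h
    refine ⟨by linarith, ⟨by linarith, hmem.2⟩, hstr, ?_, ?_⟩
    · rintro t ⟨ht1, ht2⟩
      exact hmin t ⟨by linarith, ht2⟩
    · rintro t ⟨ht1, ht2⟩ ht
      exact huniq t ⟨by linarith, ht2⟩ ht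
  · rintro ⟨hlt, hmem, hstr, hmin, huniq⟩
    have h1 : g β' ≤ g βi := Gi.gγ ▸ hmin γi ⟨hj2.le, hu.le⟩
    have h2 : g β' < g βi := by
      rcases eq_or_lt_of_le h1 with h | h
      · exfalso
        have h4 := huniq γi ⟨hj2.le, hu.le⟩ (by rw [Gi.gγ, h])
        exact Gi.not_strict_c hg (h4 ▸ hstr)
      · exact h
    have hβ'γi : γi < β' := by
      rcases le_or_gt β' γi with h | h
      · exfalso
        have := Gi.min β' ⟨by linarith [hmem.1], h⟩
        linarith
      · exact h
    refine ⟨by linarith, ⟨by linarith, hmem.2⟩, hstr, ?_, ?_⟩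
    · rintro t ⟨ht1, ht2⟩
      rcases lt_or_ge t αj with h | h
      · exact le_trans h2.le (Gi.min t ⟨ht1, by linarith⟩)
      · exact hmin t ⟨h, ht2⟩
    · rintro t ⟨ht1, ht2⟩ ht
      rcases lt_or_ge t αj with h | h
      · exfalso
        have := Gi.min t ⟨ht1, by linarith⟩
        rw [ht] at this
        linarith
      · exact huniq t ⟨h, ht2⟩ ht

lemma tri_left (hg : IsCRT g) (Gi : Good g αi βi γi) (hj1 : αi < αj) (hj2 : αj < γi)
    {u : ℝ} (hu : u < αi) : Tri g b s u αi ↔ Tri g b s u αj := by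
  constructor
  · rintro ⟨l, ⟨hm, hs⟩ | ⟨hm, hs⟩⟩
    · exact ⟨l, Or.inl ⟨(mrca_left hg Gi hj1 hj2 hu).mp hm, hs⟩⟩
    · exact absurd hm.1 (by linarith)
  · rintro ⟨l, ⟨hm, hs⟩ | ⟨hm, hs⟩⟩
    · exact ⟨l, Or.inl ⟨(mrca_left hg Gi hj1 hj2 hu).mpr hm, hs⟩⟩
    · exact absurd hm.1 (by linarith)

lemma tri_right (hg : IsCRT g) (Gi : Good g αi βi γi) (hj1 : αi < αj) (hj2 : αj < γi)
    {u : ℝ} (hu : γi < u) : Tri g b s u αi ↔ Tri g b s u αj := by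
  have h1 : αi < γi := by linarith
  constructor
  · rintro ⟨l, ⟨hm, hs⟩ | ⟨hm, hs⟩⟩
    · exact absurd hm.1 (by linarith)
    · exact ⟨l, Or.inr ⟨(mrca_right hg Gi hj1 hj2 hu).mp hm, hs⟩⟩
  · rintro ⟨l, ⟨hm, hs⟩ | ⟨hm, hs⟩⟩
    · exact absurd hm.1 (by linarith)
    · exact ⟨l, Or.inr ⟨(mrca_right hg Gi hj1 hj2 hu).mpr hm, hs⟩⟩

/-- points of the own interval are incomparable with `α` -/
lemma not_tri_self (G : Good g αi βi γi) {u : ℝ} (hu : u ∈ Icc αi γi) :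
    ¬ Tri g b s u αi := by
  rintro ⟨l, ⟨hm, _⟩ | ⟨hm, _⟩⟩
  · exact absurd hm.1 (not_lt.mpr hu.1)
  · obtain ⟨hlt, hmem, hstr, hmin, huniq⟩ := hm
    have h1 : g (b l) ≤ g βi := G.gα ▸ hmin αi ⟨le_rfl, hlt.le⟩
    have h2 : g βi ≤ g (b l) := G.min _ ⟨hmem.1.le, le_trans hmem.2.le hu.2⟩
    have h4 := huniq αi ⟨le_rfl, hlt.le⟩ (by rw [G.gα, le_antisymm h1 h2])
    exact absurd (h4 ▸ hmem.1) (lt_irrefl _)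

lemma not_tri_ai (Gi : Good g αi βi γi) (hj1 : αi < αj) (hj2 : αj < γi) :
    ¬ Tri g b s αi αj := by
  rintro ⟨l, ⟨hm, _⟩ | ⟨hm, _⟩⟩
  · obtain ⟨hlt, hmem, hstr, hmin, huniq⟩ := hm
    have h1 : g (b l) ≤ g βi := Gi.gα ▸ hmin αi ⟨le_rfl, hlt.le⟩
    have h2 : g βi ≤ g (b l) := Gi.min _ ⟨hmem.1.le, by linarith [hmem.2]⟩
    have h4 := huniq αi ⟨le_rfl, hlt.le⟩ (by rw [Gi.gα, le_antisymm h1 h2])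
    exact absurd (h4 ▸ hmem.1) (lt_irrefl _)
  · exact absurd hm.1 (by linarith)

lemma not_tri_ci (Gi : Good g αi βi γi) (hj1 : αi < αj) (hj2 : αj < γi) :
    ¬ Tri g b s γi αj := by
  rintro ⟨l, ⟨hm, _⟩ | ⟨hm, _⟩⟩
  · exact absurd hm.1 (by linarith)
  · obtain ⟨hlt, hmem, hstr, hmin, huniq⟩ := hm
    have h1 : g (b l) ≤ g βi := Gi.gγ ▸ hmin γi ⟨hlt.le, le_rfl⟩
    have h2 : g βi ≤ g (b l) := Gi.min _ ⟨by linarith [hmem.1], hmem.2.le⟩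
    have h4 := huniq γi ⟨hlt.le, le_rfl⟩ (by rw [Gi.gγ, le_antisymm h1 h2])
    exact absurd (h4 ▸ hmem.2) (lt_irrefl _)

/-- case 1 : `βi` itself is incomparable with `αj` when `αj < βi` -/
lemma not_tri_bi1 (Gi : Good g αi βi γi) (hj1 : αi < αj) (hj2 : αj < βi) :
    ¬ Tri g b s βi αj := by
  rintro ⟨l, ⟨hm, _⟩ | ⟨hm, _⟩⟩
  · exact absurd hm.1 (by linarith)
  · obtain ⟨hlt, hmem, hstr, hmin, huniq⟩ := hm
    have h1 : g (b l) ≤ g βi := hmin βi ⟨hlt.le, le_rfl⟩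
    have h2 : g βi < g (b l) := Gi.mid1 _ (by linarith [hmem.1]) hmem.2
    linarith

/-- case 2 : `βi` itself is incomparable with `αj` when `βi < αj` -/
lemma not_tri_bi2 (Gi : Good g αi βi γi) (hj1 : βi < αj) (hj2 : αj < γi) :
    ¬ Tri g b s βi αj := by
  rintro ⟨l, ⟨hm, _⟩ | ⟨hm, _⟩⟩
  · obtain ⟨hlt, hmem, hstr, hmin, huniq⟩ := hm
    have h1 : g (b l) ≤ g βi := hmin βi ⟨le_rfl, hlt.le⟩
    have h2 : g βi < g (b l) := Gi.mid2 _ hmem.1 (by linarith [hmem.2])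
    linarith
  · exact absurd hm.1 (by linarith)

/-- case 1 : on the far side `(βi, γi)`, comparability with `αj` is decided by `s i`. -/
lemma tri_far1 (hg : IsCRT g) (hb : IsEnum g b) {i : ℕ} (Gi : Good g αi (b i) γi)
    (hj1 : αi < αj) (hj2 : αj < b i) {u : ℝ} (hu : u ∈ Ioo (b i) γi) :
    (s i = true → ¬ Tri g b s u αj) ∧ (s i = false → Tri g b s u αj) := by
  have hmrca : IsMrca g (b i) αj u := by
    refine ⟨by linarith [hu.1], ⟨hj2, hu.1⟩, Gi.strict, ?_, ?_⟩
    · rintro t ⟨ht1, ht2⟩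
      exact Gi.min t ⟨by linarith, by linarith [hu.2]⟩
    · rintro t ⟨ht1, ht2⟩ ht
      rcases Gi.eqc t ⟨by linarith, by linarith [hu.2]⟩ ht with h | h | h
      · exact absurd (h ▸ ht1) (by linarith)
      · exact h
      · exact absurd (h ▸ ht2) (by linarith [hu.2])
  constructor
  · intro hsi
    rintro ⟨l, ⟨hm, _⟩ | ⟨hm, hs⟩⟩
    · exact absurd hm.1 (by linarith [hu.1])
    · obtain ⟨hlt, hmem, hstr, hmin, huniq⟩ := hm
      have h1 : g (b l) ≤ g (b i) := hmin (b i) ⟨hj2.le, hu.1.le⟩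
      have h2 : g (b i) ≤ g (b l) := Gi.min _ ⟨by linarith [hmem.1], by linarith [hmem.2, hu.2]⟩
      have h4 : b l = b i := strict_eq hg hstr Gi.strict (le_antisymm h1 h2)
      have := hb.1 h4
      rw [this, hsi] at hs
      exact absurd hs (by simp)
  · intro hsi
    exact ⟨i, Or.inr ⟨hmrca, hsi⟩⟩

/-- case 2 : on the near side `(αi, βi)`, comparability with `αj` is decided by `s i`. -/
lemma tri_far2 (hg : IsCRT g) (hb : IsEnum g b) {i : ℕ} (Gi : Good g αi (b i) γi)
    (hj1 : b i < αj) (hj2 : αj < γi) {u : ℝ} (hu : u ∈ Ioo αi (b i)) :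
    (s i = true → Tri g b s u αj) ∧ (s i = false → ¬ Tri g b s u αj) := by
  have hmrca : IsMrca g (b i) u αj := by
    refine ⟨by linarith [hu.2], ⟨hu.2, hj1⟩, Gi.strict, ?_, ?_⟩
    · rintro t ⟨ht1, ht2⟩
      exact Gi.min t ⟨by linarith [hu.1], by linarith⟩
    · rintro t ⟨ht1, ht2⟩ ht
      rcases Gi.eqc t ⟨by linarith [hu.1], by linarith⟩ ht with h | h | h
      · exact absurd (h ▸ ht1) (by linarith [hu.1])
      · exact h
      · exact absurd (h ▸ ht2) (by linarith)
  constructor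
  · intro hsi
    exact ⟨i, Or.inl ⟨hmrca, hsi⟩⟩
  · intro hsi
    rintro ⟨l, ⟨hm, hs⟩ | ⟨hm, _⟩⟩
    · obtain ⟨hlt, hmem, hstr, hmin, huniq⟩ := hm
      have h1 : g (b l) ≤ g (b i) := hmin (b i) ⟨hu.2.le, hj1.le⟩
      have h2 : g (b i) ≤ g (b l) := Gi.min _ ⟨by linarith [hmem.1, hu.1], by linarith [hmem.2]⟩
      have h4 : b l = b i := strict_eq hg hstr Gi.strict (le_antisymm h1 h2)
      have := hb.1 h4
      rw [this, hsi] at hs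
      exact absurd hs (by simp)
    · exact absurd hm.1 (by linarith [hu.2])

end Mrca

section Measure
variable {g : ℝ → ℝ} {b : ℕ → ℝ} {s : ℕ → Bool}

lemma vol_ne_top {T : Set ℝ} (hT : T ⊆ Icc 0 1) : volume T ≠ ⊤ :=
  (lt_of_le_of_lt (measure_mono hT)
    (by rw [Real.volume_Icc]; exact ENNReal.ofReal_lt_top)).ne

lemma phi_mono {x y : ℝ}
    (h : ∀ u ∈ Icc (0:ℝ) 1, Tri g b s u x → Tri g b s u y) :
    phi g b s x ≤ phi g b s y := by
  unfold phi
  refine ENNReal.toReal_mono (vol_ne_top (sep_subset _ _)) (measure_mono ?_)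
  rintro u ⟨hu1, hu2⟩
  exact ⟨hu1, h u hu1 hu2⟩

lemma phi_le {x y p q r t : ℝ} (hpq : p ≤ q) (hrt : r ≤ t)
    (h : ∀ u ∈ Icc (0:ℝ) 1, Tri g b s u y →
      Tri g b s u x ∨ u ∈ Ioo p q ∨ u ∈ Ioo r t) :
    phi g b s y ≤ phi g b s x + (q - p) + (t - r) := by
  set A := {u ∈ Icc (0:ℝ) 1 | Tri g b s u x} with hA
  set B := {u ∈ Icc (0:ℝ) 1 | Tri g b s u y} with hB
  have hAsub : A ⊆ Icc 0 1 := sep_subset _ _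
  have hBsub : B ⊆ Icc 0 1 := sep_subset _ _
  have hsub : B ⊆ A ∪ Ioo p q ∪ Ioo r t := by
    rintro u ⟨hu1, hu2⟩
    rcases h u hu1 hu2 with h' | h' | h'
    · exact Or.inl (Or.inl ⟨hu1, h'⟩)
    · exact Or.inl (Or.inr h')
    · exact Or.inr h'
  have h1 : volume B ≤ volume A + ENNReal.ofReal (q - p) + ENNReal.ofReal (t - r) := by
    calc volume B ≤ volume (A ∪ Ioo p q) + volume (Ioo r t) :=
          (measure_mono hsub).trans (measure_union_le _ _)
    _ ≤ (volume A + volume (Ioo p q)) + volume (Ioo r t) :=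
          add_le_add (measure_union_le _ _) le_rfl
    _ = _ := by rw [Real.volume_Ioo, Real.volume_Ioo]
  have h2 := ENNReal.toReal_mono (by
    refine ENNReal.add_ne_top.mpr ⟨ENNReal.add_ne_top.mpr ⟨vol_ne_top hAsub, ?_⟩, ?_⟩ <;>
      exact ENNReal.ofReal_ne_top) h1
  rw [ENNReal.toReal_add (ENNReal.add_ne_top.mpr ⟨vol_ne_top hAsub, ENNReal.ofReal_ne_top⟩)
    ENNReal.ofReal_ne_top, ENNReal.toReal_add (vol_ne_top hAsub) ENNReal.ofReal_ne_top,
    ENNReal.toReal_ofReal (by linarith), ENNReal.toReal_ofReal (by linarith)] at h2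
  exact h2

lemma phi_ge {x y p q : ℝ} (hpq : p ≤ q) (hIcc : Ioo p q ⊆ Icc (0:ℝ) 1)
    (h1 : ∀ u ∈ Icc (0:ℝ) 1, Tri g b s u x → Tri g b s u y)
    (h2 : ∀ u ∈ Ioo p q, Tri g b s u y)
    (h3 : ∀ u ∈ Ioo p q, ¬ Tri g b s u x) :
    phi g b s x + (q - p) ≤ phi g b s y := by
  set A := {u ∈ Icc (0:ℝ) 1 | Tri g b s u x} with hA
  set B := {u ∈ Icc (0:ℝ) 1 | Tri g b s u y} with hB
  have hAsub : A ⊆ Icc 0 1 := sep_subset _ _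
  have hBsub : B ⊆ Icc 0 1 := sep_subset _ _
  have hd : Disjoint A (Ioo p q) := by
    rw [disjoint_right]
    rintro u hu ⟨_, hu2⟩
    exact h3 u hu hu2
  have hsub : A ∪ Ioo p q ⊆ B := by
    rintro u (⟨hu1, hu2⟩ | hu)
    · exact ⟨hu1, h1 u hu1 hu2⟩
    · exact ⟨hIcc hu, h2 u hu⟩
  have hkey : volume A + ENNReal.ofReal (q - p) ≤ volume B := by
    rw [← Real.volume_Ioo, ← measure_union hd measurableSet_Ioo]
    exact measure_mono hsub
  have h4 := ENNReal.toReal_mono (vol_ne_top hBsub) hkey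
  rwa [ENNReal.toReal_add (vol_ne_top hAsub) ENNReal.ofReal_ne_top,
    ENNReal.toReal_ofReal (by linarith)] at h4

end Measure

section Region
variable {g : ℝ → ℝ} {b : ℕ → ℝ} {s : ℕ → Bool} {αi βi γi αj : ℝ}

lemma tri_sub (hg : IsCRT g) (Gi : Good g αi βi γi) (hj1 : αi < αj) (hj2 : αj < γi)
    {u : ℝ} (ht : Tri g b s u αi) : Tri g b s u αj := by
  rcases lt_or_ge u αi with h | h
  · exact (tri_left hg Gi hj1 hj2 h).mp ht
  rcases le_or_gt u γi with h2 | h2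
  · exact absurd ht (not_tri_self Gi ⟨h, h2⟩)
  · exact (tri_right hg Gi hj1 hj2 h2).mp ht

variable {i j : ℕ}

lemma region1s (hg : IsCRT g) (hb : IsEnum g b)
    (Gi : Good g (aI g b i) (b i) (cI g b i)) (Gj : Good g (aI g b j) (b j) (cI g b j))
    (hj1 : aI g b i < aI g b j) (hj4 : cI g b j < b i) (hsi : s i = true)
    {u : ℝ} (ht : Tri g b s u (aI g b j)) :
    Tri g b s u (aI g b i) ∨ u ∈ Ioo (aI g b i) (aI g b j) ∨ u ∈ Ioo (cI g b j) (b i) := by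
  have hlen : aI g b j < cI g b j := Gj.hαβ.trans Gj.hβγ
  have hj2 : aI g b j < cI g b i := by linarith [Gi.hβγ]
  rcases lt_or_ge u (aI g b i) with h | h
  · exact Or.inl ((tri_left hg Gi hj1 hj2 h).mpr ht)
  rcases eq_or_lt_of_le h with rfl | h
  · exact absurd ht (not_tri_ai Gi hj1 hj2)
  rcases lt_or_ge u (aI g b j) with h2 | h2
  · exact Or.inr (Or.inl ⟨h, h2⟩)
  rcases le_or_gt u (cI g b j) with h3 | h3
  · exact absurd ht (not_tri_self Gj ⟨h2, h3⟩)
  rcases lt_or_ge u (b i) with h4 | h4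
  · exact Or.inr (Or.inr ⟨h3, h4⟩)
  rcases eq_or_lt_of_le h4 with rfl | h4
  · exact absurd ht (not_tri_bi1 Gi hj1 (by linarith))
  rcases lt_or_ge u (cI g b i) with h5 | h5
  · exact absurd ht ((tri_far1 hg hb Gi hj1 (by linarith) ⟨h4, h5⟩).1 hsi)
  rcases eq_or_lt_of_le h5 with rfl | h5
  · exact absurd ht (not_tri_ci Gi hj1 hj2)
  · exact Or.inl ((tri_right hg Gi hj1 hj2 h5).mpr ht)

lemma region1 (hg : IsCRT g) (hb : IsEnum g b)
    (Gi : Good g (aI g b i) (b i) (cI g b i)) (Gj : Good g (aI g b j) (b j) (cI g b j))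
    (hj1 : aI g b i < aI g b j) (hj4 : cI g b j < b i)
    {u : ℝ} (ht : Tri g b s u (aI g b j)) :
    Tri g b s u (aI g b i) ∨ u ∈ Ioo (aI g b i) (aI g b j) ∨
      u ∈ Ioo (cI g b j) (cI g b i) := by
  have hlen : aI g b j < cI g b j := Gj.hαβ.trans Gj.hβγ
  have hj2 : aI g b j < cI g b i := by linarith [Gi.hβγ]
  rcases lt_or_ge u (aI g b i) with h | h
  · exact Or.inl ((tri_left hg Gi hj1 hj2 h).mpr ht)
  rcases eq_or_lt_of_le h with rfl | h
  · exact absurd ht (not_tri_ai Gi hj1 hj2)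
  rcases lt_or_ge u (aI g b j) with h2 | h2
  · exact Or.inr (Or.inl ⟨h, h2⟩)
  rcases le_or_gt u (cI g b j) with h3 | h3
  · exact absurd ht (not_tri_self Gj ⟨h2, h3⟩)
  rcases lt_or_ge u (cI g b i) with h4 | h4
  · exact Or.inr (Or.inr ⟨h3, h4⟩)
  rcases eq_or_lt_of_le h4 with rfl | h4
  · exact absurd ht (not_tri_ci Gi hj1 hj2)
  · exact Or.inl ((tri_right hg Gi hj1 hj2 h4).mpr ht)

lemma region2 (hg : IsCRT g) (hb : IsEnum g b)
    (Gi : Good g (aI g b i) (b i) (cI g b i)) (Gj : Good g (aI g b j) (b j) (cI g b j))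
    (hj1 : b i < aI g b j) (hj4 : cI g b j < cI g b i)
    {u : ℝ} (ht : Tri g b s u (aI g b j)) :
    Tri g b s u (aI g b i) ∨ u ∈ Ioo (aI g b i) (aI g b j) ∨
      u ∈ Ioo (cI g b j) (cI g b i) := by
  have hlen : aI g b j < cI g b j := Gj.hαβ.trans Gj.hβγ
  have hj0 : aI g b i < aI g b j := by linarith [Gi.hαβ]
  have hj2 : aI g b j < cI g b i := by linarith
  rcases lt_or_ge u (aI g b i) with h | h
  · exact Or.inl ((tri_left hg Gi hj0 hj2 h).mpr ht)
  rcases eq_or_lt_of_le h with rfl | h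
  · exact absurd ht (not_tri_ai Gi hj0 hj2)
  rcases lt_or_ge u (aI g b j) with h2 | h2
  · exact Or.inr (Or.inl ⟨h, h2⟩)
  rcases le_or_gt u (cI g b j) with h3 | h3
  · exact absurd ht (not_tri_self Gj ⟨h2, h3⟩)
  rcases lt_or_ge u (cI g b i) with h4 | h4
  · exact Or.inr (Or.inr ⟨h3, h4⟩)
  rcases eq_or_lt_of_le h4 with rfl | h4
  · exact absurd ht (not_tri_ci Gi hj0 hj2)
  · exact Or.inl ((tri_right hg Gi hj0 hj2 h4).mpr ht)

lemma region2s (hg : IsCRT g) (hb : IsEnum g b)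
    (Gi : Good g (aI g b i) (b i) (cI g b i)) (Gj : Good g (aI g b j) (b j) (cI g b j))
    (hj1 : b i < aI g b j) (hj4 : cI g b j < cI g b i) (hsi : s i = false)
    {u : ℝ} (ht : Tri g b s u (aI g b j)) :
    Tri g b s u (aI g b i) ∨ u ∈ Ioo (b i) (aI g b j) ∨
      u ∈ Ioo (cI g b j) (cI g b i) := by
  have hlen : aI g b j < cI g b j := Gj.hαβ.trans Gj.hβγ
  have hj0 : aI g b i < aI g b j := by linarith [Gi.hαβ]
  have hj2 : aI g b j < cI g b i := by linarith
  rcases lt_or_ge u (aI g b i) with h | h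
  · exact Or.inl ((tri_left hg Gi hj0 hj2 h).mpr ht)
  rcases eq_or_lt_of_le h with rfl | h
  · exact absurd ht (not_tri_ai Gi hj0 hj2)
  rcases lt_or_ge u (b i) with h2 | h2
  · exact absurd ht ((tri_far2 hg hb Gi hj1 hj2 ⟨h, h2⟩).2 hsi)
  rcases eq_or_lt_of_le h2 with rfl | h2
  · exact absurd ht (not_tri_bi2 Gi hj1 hj2)
  rcases lt_or_ge u (aI g b j) with h3 | h3
  · exact Or.inr (Or.inl ⟨h2, h3⟩)
  rcases le_or_gt u (cI g b j) with h4 | h4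
  · exact absurd ht (not_tri_self Gj ⟨h3, h4⟩)
  rcases lt_or_ge u (cI g b i) with h5 | h5
  · exact Or.inr (Or.inr ⟨h4, h5⟩)
  rcases eq_or_lt_of_le h5 with rfl | h5
  · exact absurd ht (not_tri_ci Gi hj0 hj2)
  · exact Or.inl ((tri_right hg Gi hj0 hj2 h5).mpr ht)

end Region

end CRTstmt5
/-- Nesting of the shuffled intervals according to the sign at the ancestor. -/
theorem stmt5 (g : ℝ → ℝ) (hg : IsCRT g) (b : ℕ → ℝ) (hb : IsEnum g b) (s : ℕ → Bool)
    (i j : ℕ) :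
    (Set.Icc (aI g b j) (cI g b j) ⊆ Set.Ioo (aI g b i) (b i) →
      (s i = true → Set.Icc (aI' g b s j) (cI' g b s j) ⊆ Set.Icc (aI' g b s i) (bI' g b s i)) ∧
      (s i = false → Set.Icc (aI' g b s j) (cI' g b s j) ⊆ Set.Icc (bI' g b s i) (cI' g b s i))) ∧
    (Set.Icc (aI g b j) (cI g b j) ⊆ Set.Ioo (b i) (cI g b i) →
      (s i = true → Set.Icc (aI' g b s j) (cI' g b s j) ⊆ Set.Icc (bI' g b s i) (cI' g b s i)) ∧
      (s i = false → Set.Icc (aI' g b s j) (cI' g b s j) ⊆ Set.Icc (aI' g b s i) (bI' g b s i))) := by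
  obtain ⟨hbinj, hben⟩ := hb
  have Gi := CRTstmt5.good_i hg ⟨hbinj, hben⟩ i
  have Gj := CRTstmt5.good_i hg ⟨hbinj, hben⟩ j
  have hlen : aI g b j < cI g b j := Gj.hαβ.trans Gj.hβγ
  constructor
  · intro H1
    have hαj := H1 ⟨le_rfl, hlen.le⟩
    have hγj := H1 ⟨hlen.le, le_rfl⟩
    have hj1 : aI g b i < aI g b j := hαj.1
    have hj4 : cI g b j < b i := hγj.2
    have hj2 : aI g b j < cI g b i := by linarith [Gi.hβγ]
    have hAB : ∀ u ∈ Icc (0:ℝ) 1, Tri g b s u (aI g b i) → Tri g b s u (aI g b j) :=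
      fun u _ ht => CRTstmt5.tri_sub hg Gi hj1 hj2 ht
    constructor
    · intro hsi
      have e1 : phi g b s (aI g b i) ≤ phi g b s (aI g b j) := CRTstmt5.phi_mono hAB
      have e2 : phi g b s (aI g b j) ≤ phi g b s (aI g b i) +
          (aI g b j - aI g b i) + (b i - cI g b j) :=
        CRTstmt5.phi_le hj1.le hj4.le
          (fun u _ ht => CRTstmt5.region1s hg ⟨hbinj, hben⟩ Gi Gj hj1 hj4 hsi ht)
      have hbI : bI' g b s i = aI' g b s i + (b i - aI g b i) := by
        simp only [bI', hsi, if_true]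
      rw [hbI]
      simp only [aI', cI']
      exact Icc_subset_Icc e1 (by linarith)
    · intro hsi
      have e1 : phi g b s (aI g b i) + (cI g b i - b i) ≤ phi g b s (aI g b j) := by
        refine CRTstmt5.phi_ge Gi.hβγ.le ?_ hAB
          (fun u hu => (CRTstmt5.tri_far1 hg ⟨hbinj, hben⟩ Gi hj1 (by linarith) hu).2 hsi)
          (fun u hu => CRTstmt5.not_tri_self Gi ⟨by linarith [hu.1, Gi.hαβ], hu.2.le⟩)
        rintro u ⟨hu1, hu2⟩
        constructor
        · linarith [Gi.hα, Gi.hαβ]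
        · linarith [Gi.hγ]
      have e2 : phi g b s (aI g b j) ≤ phi g b s (aI g b i) +
          (aI g b j - aI g b i) + (cI g b i - cI g b j) :=
        CRTstmt5.phi_le hj1.le (by linarith [Gi.hβγ])
          (fun u _ ht => CRTstmt5.region1 hg ⟨hbinj, hben⟩ Gi Gj hj1 hj4 ht)
      have hbI : bI' g b s i = aI' g b s i + (cI g b i - b i) := by
        simp only [bI', hsi, Bool.false_eq_true, if_false]
      rw [hbI]
      simp only [aI', cI']
      exact Icc_subset_Icc (by linarith) (by linarith)
  · intro H2
    have hαj := H2 ⟨le_rfl, hlen.le⟩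
    have hγj := H2 ⟨hlen.le, le_rfl⟩
    have hj1 : b i < aI g b j := hαj.1
    have hj4 : cI g b j < cI g b i := hγj.2
    have hj0 : aI g b i < aI g b j := by linarith [Gi.hαβ]
    have hj2 : aI g b j < cI g b i := by linarith
    have hAB : ∀ u ∈ Icc (0:ℝ) 1, Tri g b s u (aI g b i) → Tri g b s u (aI g b j) :=
      fun u _ ht => CRTstmt5.tri_sub hg Gi hj0 hj2 ht
    constructor
    · intro hsi
      have e1 : phi g b s (aI g b i) + (b i - aI g b i) ≤ phi g b s (aI g b j) := by
        refine CRTstmt5.phi_ge Gi.hαβ.le ?_ hAB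
          (fun u hu => (CRTstmt5.tri_far2 hg ⟨hbinj, hben⟩ Gi hj1 hj2 hu).1 hsi)
          (fun u hu => CRTstmt5.not_tri_self Gi ⟨hu.1.le, by linarith [hu.2, Gi.hβγ]⟩)
        rintro u ⟨hu1, hu2⟩
        constructor
        · linarith [Gi.hα]
        · linarith [Gi.hβγ, Gi.hγ]
      have e2 : phi g b s (aI g b j) ≤ phi g b s (aI g b i) +
          (aI g b j - aI g b i) + (cI g b i - cI g b j) :=
        CRTstmt5.phi_le hj0.le (by linarith)
          (fun u _ ht => CRTstmt5.region2 hg ⟨hbinj, hben⟩ Gi Gj hj1 hj4 ht)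
      have hbI : bI' g b s i = aI' g b s i + (b i - aI g b i) := by
        simp only [bI', hsi, if_true]
      rw [hbI]
      simp only [aI', cI']
      exact Icc_subset_Icc (by linarith) (by linarith)
    · intro hsi
      have e1 : phi g b s (aI g b i) ≤ phi g b s (aI g b j) := CRTstmt5.phi_mono hAB
      have e2 : phi g b s (aI g b j) ≤ phi g b s (aI g b i) +
          (aI g b j - b i) + (cI g b i - cI g b j) :=
        CRTstmt5.phi_le hj1.le (by linarith)
          (fun u _ ht => CRTstmt5.region2s hg ⟨hbinj, hben⟩ Gi Gj hj1 hj4 hsi ht)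
      have hbI : bI' g b s i = aI' g b s i + (cI g b i - b i) := by
        simp only [bI', hsi, Bool.false_eq_true, if_false]
      rw [hbI]
      simp only [aI', cI']
      exact Icc_subset_Icc e1 (by linarith)


end
end

section
/- For every permutation σ ∈ S_n, the Kolmogorov distance between the permuton μ_σ and the measure (Id, φ_σ)_* Leb is at most 2/n, where the Kolmogorov distance between measures ν, π on [0,1]² is sup_{x,y ∈ [0,1]} |ν − π|([0,x]×[0,y]). -/
open MeasureTheory Set

noncomputable section

/-- Index of the subinterval of `[0,1]` of length `1/n` containing `x`. -/
def finIdx (n : ℕ) (hn : 0 < n) (x : ℝ) : Fin n :=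
  ⟨min (Nat.floor ((n : ℝ) * x)) (n-1), by omega⟩

/-- The permuton `μ_σ` of a permutation `σ ∈ S_n`. -/
def permMeasure (n : ℕ) (hn : 0 < n) (σ : Equiv.Perm (Fin n)) : Measure (ℝ × ℝ) :=
  (volume.restrict (Set.Icc (0:ℝ) 1 ×ˢ Set.Icc (0:ℝ) 1)).withDensity
    (fun p => if σ (finIdx n hn p.1) = finIdx n hn p.2 then (n : ENNReal) else 0)

/-- The piecewise affine measure-preserving map `φ_σ`. -/
def phiPerm (n : ℕ) (hn : 0 < n) (σ : Equiv.Perm (Fin n)) (t : ℝ) : ℝ :=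
  ((σ (finIdx n hn t) : ℕ) : ℝ) / n + Int.fract ((n : ℝ) * t) / n

variable {n : ℕ} (hn : 0 < n)

lemma volIcoIic (a b c : ℝ) (hab : a ≤ b) :
    volume (Ico a b ∩ Iic c) = ENNReal.ofReal (min c b - min c a) := by
  rcases lt_or_ge c a with h | h
  · have he : Ico a b ∩ Iic c = ∅ := by
      ext t; simp only [mem_inter_iff, mem_Ico, mem_Iic, mem_empty_iff_false, iff_false]
      rintro ⟨⟨h1, h2⟩, h3⟩; linarith
    rw [he, min_eq_left (h.le.trans hab), min_eq_left h.le]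
    simp
  · rcases lt_or_ge c b with h2 | h2
    · have he : Ico a b ∩ Iic c = Icc a c := by
        ext t; simp only [mem_inter_iff, mem_Ico, mem_Iic, mem_Icc]
        constructor
        · rintro ⟨⟨h1, _⟩, h3⟩; exact ⟨h1, h3⟩
        · rintro ⟨h1, h3⟩; exact ⟨⟨h1, lt_of_le_of_lt h3 h2⟩, h3⟩
      rw [he, Real.volume_Icc, min_eq_left h2.le, min_eq_right h]
    · have he : Ico a b ∩ Iic c = Ico a b :=
        inter_eq_left.mpr fun t ht => le_trans ht.2.le h2
      rw [he, Real.volume_Ico, min_eq_right h2, min_eq_right (hab.trans h2)]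

lemma finIdx_eq_of (k : Fin n) {t : ℝ} (h1 : (k : ℝ)/n ≤ t) (h2 : t < ((k : ℝ)+1)/n) :
    finIdx n hn t = k := by
  have hn' : (0:ℝ) < n := Nat.cast_pos.mpr hn
  have h1' : (k : ℝ) ≤ n * t := by rw [div_le_iff₀ hn'] at h1; linarith
  have h2' : (n : ℝ) * t < k + 1 := by rw [lt_div_iff₀ hn'] at h2; linarith
  have h0 : (0:ℝ) ≤ n * t := le_trans (by positivity) h1'
  have hfl : ⌊(n:ℝ) * t⌋₊ = (k : ℕ) :=
    (Nat.floor_eq_iff h0).mpr ⟨by exact_mod_cast h1', by exact_mod_cast h2'⟩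
  have hk : (k : ℕ) ≤ n - 1 := by have := k.isLt; omega
  exact Fin.ext (by simp [finIdx, hfl, min_eq_left hk])

lemma sub_finIdx (k : Fin n) :
    Ico ((k : ℝ)/n) (((k : ℝ)+1)/n) ⊆ {t : ℝ | finIdx n hn t = k} ∩ Icc 0 1 := by
  intro t ⟨h1, h2⟩
  have hn' : (0:ℝ) < n := Nat.cast_pos.mpr hn
  have hb : ((k : ℝ)+1)/n ≤ 1 := by
    rw [div_le_one hn']; exact_mod_cast k.isLt
  exact ⟨finIdx_eq_of hn k h1 h2, le_trans (by positivity) h1, le_of_lt (lt_of_lt_of_le h2 hb)⟩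

lemma finIdx_sub (k : Fin n) :
    {t : ℝ | finIdx n hn t = k} ∩ Icc 0 1 ⊆ Ico ((k : ℝ)/n) (((k : ℝ)+1)/n) ∪ {1} := by
  rintro t ⟨hk, h0, h1⟩
  rcases eq_or_lt_of_le h1 with h | h
  · right; exact mem_singleton_iff.mpr h
  · left
    have hn' : (0:ℝ) < n := Nat.cast_pos.mpr hn
    have h0' : (0:ℝ) ≤ n * t := by positivity
    have hlt : ⌊(n:ℝ) * t⌋₊ < n := by
      rw [Nat.floor_lt h0']; nlinarith
    have hval : ⌊(n:ℝ) * t⌋₊ = (k : ℕ) := by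
      have := congrArg Fin.val hk
      simp only [finIdx] at this
      omega
    constructor
    · rw [div_le_iff₀ hn']
      have := Nat.floor_le h0'
      rw [hval] at this; linarith [this]
    · rw [lt_div_iff₀ hn']
      have := Nat.lt_floor_add_one ((n:ℝ) * t)
      rw [hval] at this; linarith [this]

lemma vol_finIdx_inter (k : Fin n) (A : Set ℝ) :
    volume ({t : ℝ | finIdx n hn t = k} ∩ Icc 0 1 ∩ A) =
      volume (Ico ((k : ℝ)/n) (((k : ℝ)+1)/n) ∩ A) := by
  apply le_antisymm
  · calc volume ({t : ℝ | finIdx n hn t = k} ∩ Icc 0 1 ∩ A)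
        ≤ volume ((Ico ((k : ℝ)/n) (((k : ℝ)+1)/n) ∪ {1}) ∩ A) :=
          measure_mono (inter_subset_inter_left A (finIdx_sub hn k))
      _ = volume ((Ico ((k : ℝ)/n) (((k : ℝ)+1)/n) ∩ A) ∪ ({1} ∩ A)) := by
          rw [union_inter_distrib_right]
      _ ≤ volume (Ico ((k : ℝ)/n) (((k : ℝ)+1)/n) ∩ A) + volume (({1} : Set ℝ) ∩ A) :=
          measure_union_le _ _
      _ ≤ volume (Ico ((k : ℝ)/n) (((k : ℝ)+1)/n) ∩ A) + 0 := by
          gcongr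
          exact le_trans (measure_mono inter_subset_left) (by simp)
      _ = volume (Ico ((k : ℝ)/n) (((k : ℝ)+1)/n) ∩ A) := add_zero _
  · exact measure_mono (inter_subset_inter_left A (sub_finIdx hn k))

lemma measurable_finIdx : Measurable (finIdx n hn) := by
  apply measurable_to_countable'
  intro k
  have he : finIdx n hn ⁻¹' {k} = (fun t : ℝ => min ⌊(n:ℝ)*t⌋₊ (n-1)) ⁻¹' {(k : ℕ)} := by
    ext t; simp [finIdx, Fin.ext_iff]
  rw [he]
  exact ((Nat.measurable_floor.comp (measurable_const_mul _)).min measurable_const)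
    (measurableSet_singleton _)

lemma measurable_phiPerm (σ : Equiv.Perm (Fin n)) : Measurable (phiPerm n hn σ) := by
  apply Measurable.add
  · exact (measurable_from_top (f := fun k : Fin n => ((σ k : ℕ) : ℝ)/n)).comp (measurable_finIdx hn)
  · exact (measurable_fract.comp (measurable_const_mul _)).div_const _

lemma phiPerm_eq (σ : Equiv.Perm (Fin n)) (k : Fin n) {t : ℝ}
    (h1 : (k : ℝ)/n ≤ t) (h2 : t < ((k : ℝ)+1)/n) :
    phiPerm n hn σ t = ((σ k : ℕ) : ℝ)/n + (t - (k : ℝ)/n) := by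
  have hn' : (0:ℝ) < n := Nat.cast_pos.mpr hn
  have h1' : (k : ℝ) ≤ n * t := by rw [div_le_iff₀ hn'] at h1; linarith
  have h2' : (n : ℝ) * t < k + 1 := by rw [lt_div_iff₀ hn'] at h2; linarith
  have hfl : ⌊(n:ℝ) * t⌋ = ((k : ℕ) : ℤ) := Int.floor_eq_iff.mpr (by push_cast; exact ⟨h1', h2'⟩)
  rw [phiPerm, finIdx_eq_of hn k h1 h2, Int.fract, hfl]
  push_cast
  field_simp

lemma Icc_eq_inter {x : ℝ} (hx1 : x ≤ 1) : Icc (0:ℝ) x = Icc 0 1 ∩ Iic x := by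
  ext t
  simp only [mem_Icc, mem_inter_iff, mem_Iic]
  exact ⟨fun ⟨h0, h⟩ => ⟨⟨h0, h.trans hx1⟩, h⟩, fun ⟨⟨h0, _⟩, h⟩ => ⟨h0, h⟩⟩

lemma hEk_meas (k : Fin n) : MeasurableSet {t : ℝ | finIdx n hn t = k} :=
  measurable_finIdx hn (measurableSet_singleton k)

lemma P_eq (σ : Equiv.Perm (Fin n)) {x y : ℝ} (hx : x ∈ Icc (0:ℝ) 1) (hy : y ∈ Icc (0:ℝ) 1) :
    permMeasure n hn σ (Icc 0 x ×ˢ Icc 0 y) =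
      ∑ k : Fin n, (n : ENNReal) *
        (ENNReal.ofReal (min x (((k:ℝ)+1)/n) - min x ((k:ℝ)/n)) *
         ENNReal.ofReal (min y ((((σ k : ℕ):ℝ)+1)/n) - min y (((σ k : ℕ):ℝ)/n))) := by
  have hS : MeasurableSet (Icc (0:ℝ) x ×ˢ Icc (0:ℝ) y) :=
    measurableSet_Icc.prod measurableSet_Icc
  set A := ⋃ k : Fin n, ({t : ℝ | finIdx n hn t = k} ×ˢ {t : ℝ | finIdx n hn t = σ k})
    with hA
  have hAmem : ∀ p : ℝ × ℝ, p ∈ A ↔ σ (finIdx n hn p.1) = finIdx n hn p.2 := by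
    intro p
    simp only [hA, mem_iUnion, mem_prod, mem_setOf_eq]
    constructor
    · rintro ⟨k, h1, h2⟩; rw [h1, ← h2]
    · intro h; exact ⟨finIdx n hn p.1, rfl, h.symm⟩
  have hAm : MeasurableSet A :=
    MeasurableSet.iUnion fun k => (hEk_meas hn k).prod (hEk_meas hn (σ k))
  have hdens : (fun p : ℝ × ℝ =>
      if σ (finIdx n hn p.1) = finIdx n hn p.2 then (n : ENNReal) else 0) =
      A.indicator (fun _ => (n : ENNReal)) := by
    funext p
    by_cases h : σ (finIdx n hn p.1) = finIdx n hn p.2 <;>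
      simp [indicator_apply, hAmem p, h]
  rw [permMeasure, withDensity_apply _ hS, Measure.restrict_restrict hS,
    inter_eq_left.mpr (prod_mono (Icc_subset_Icc_right hx.2) (Icc_subset_Icc_right hy.2)),
    hdens, lintegral_indicator_const hAm, Measure.restrict_apply hAm]
  have hAS : A ∩ (Icc 0 x ×ˢ Icc 0 y) =
      ⋃ k : Fin n, (({t : ℝ | finIdx n hn t = k} ∩ Icc 0 x) ×ˢ
        ({t : ℝ | finIdx n hn t = σ k} ∩ Icc 0 y)) := by
    rw [hA, iUnion_inter]
    exact iUnion_congr fun k => prod_inter_prod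
  have hdisj : Pairwise (Function.onFun Disjoint fun k : Fin n =>
      (({t : ℝ | finIdx n hn t = k} ∩ Icc 0 x) ×ˢ
        ({t : ℝ | finIdx n hn t = σ k} ∩ Icc 0 y))) := by
    intro k l hkl
    refine Set.disjoint_left.mpr ?_
    rintro ⟨p1, p2⟩ hp hq
    exact hkl (hp.1.1.symm.trans hq.1.1)
  rw [hAS, measure_iUnion hdisj (fun k =>
      ((hEk_meas hn k).inter measurableSet_Icc).prod
        ((hEk_meas hn (σ k)).inter measurableSet_Icc)), tsum_fintype, Finset.mul_sum]
  refine Finset.sum_congr rfl fun k _ => ?_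
  rw [Measure.volume_eq_prod, Measure.prod_prod]
  have hvol : ∀ (j : Fin n) (z : ℝ), z ∈ Icc (0:ℝ) 1 →
      volume ({t : ℝ | finIdx n hn t = j} ∩ Icc 0 z) =
        ENNReal.ofReal (min z (((j:ℝ)+1)/n) - min z ((j:ℝ)/n)) := by
    intro j z hz
    rw [Icc_eq_inter hz.2, ← inter_assoc, vol_finIdx_inter hn j,
      volIcoIic _ _ _ (by have hn' : (0:ℝ) < n := Nat.cast_pos.mpr hn; gcongr; linarith)]
  rw [hvol k x hx, hvol (σ k) y hy]

lemma M_eq (σ : Equiv.Perm (Fin n)) {x y : ℝ} (hx : x ∈ Icc (0:ℝ) 1) (hy : y ∈ Icc (0:ℝ) 1) :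
    (Measure.map (fun t => (t, phiPerm n hn σ t)) (volume.restrict (Icc 0 1)))
        (Icc 0 x ×ˢ Icc 0 y) =
      ∑ k : Fin n, ENNReal.ofReal
        (min (min x (y + (k:ℝ)/n - ((σ k : ℕ):ℝ)/n)) (((k:ℝ)+1)/n) -
         min (min x (y + (k:ℝ)/n - ((σ k : ℕ):ℝ)/n)) ((k:ℝ)/n)) := by
  have hS : MeasurableSet (Icc (0:ℝ) x ×ˢ Icc (0:ℝ) y) :=
    measurableSet_Icc.prod measurableSet_Icc
  have hφ : Measurable fun t => (t, phiPerm n hn σ t) :=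
    measurable_id.prodMk (measurable_phiPerm hn σ)
  rw [Measure.map_apply hφ hS, Measure.restrict_apply' measurableSet_Icc]
  set pre := (fun t => (t, phiPerm n hn σ t)) ⁻¹' (Icc 0 x ×ˢ Icc 0 y) with hpre
  have hprem : MeasurableSet pre := hφ hS
  have hcover : pre ∩ Icc 0 1 = ⋃ k : Fin n, ({t : ℝ | finIdx n hn t = k} ∩ Icc 0 1 ∩ pre) := by
    ext t
    simp only [mem_iUnion, mem_inter_iff, mem_setOf_eq]
    constructor
    · rintro ⟨hp, h01⟩; exact ⟨finIdx n hn t, ⟨rfl, h01⟩, hp⟩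
    · rintro ⟨k, ⟨_, h01⟩, hp⟩; exact ⟨hp, h01⟩
  have hdisj : Pairwise (Function.onFun Disjoint fun k : Fin n =>
      ({t : ℝ | finIdx n hn t = k} ∩ Icc 0 1 ∩ pre)) := by
    intro k l hkl
    refine Set.disjoint_left.mpr ?_
    rintro t ht hq
    exact hkl (ht.1.1.symm.trans hq.1.1)
  rw [hcover, measure_iUnion hdisj (fun k =>
      ((hEk_meas hn k).inter measurableSet_Icc).inter hprem), tsum_fintype]
  refine Finset.sum_congr rfl fun k _ => ?_
  rw [vol_finIdx_inter hn k pre]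
  have hn' : (0:ℝ) < n := Nat.cast_pos.mpr hn
  have hk0 : (0:ℝ) ≤ (k:ℝ)/n := by positivity
  have hσ0 : (0:ℝ) ≤ ((σ k : ℕ):ℝ)/n := by positivity
  have hIco : Ico ((k:ℝ)/n) (((k:ℝ)+1)/n) ∩ pre =
      Ico ((k:ℝ)/n) (((k:ℝ)+1)/n) ∩ Iic (min x (y + (k:ℝ)/n - ((σ k : ℕ):ℝ)/n)) := by
    ext t
    simp only [mem_inter_iff, mem_Ico, mem_Iic, hpre, mem_preimage, mem_prod, mem_Icc]
    constructor
    · rintro ⟨⟨h1, h2⟩, ⟨ht0, htx⟩, hφ0, hφy⟩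
      rw [phiPerm_eq hn σ k h1 h2] at hφy
      exact ⟨⟨h1, h2⟩, le_min htx (by linarith)⟩
    · rintro ⟨⟨h1, h2⟩, hmin⟩
      have htx : t ≤ x := le_trans hmin (min_le_left _ _)
      have htc : t ≤ y + (k:ℝ)/n - ((σ k : ℕ):ℝ)/n := le_trans hmin (min_le_right _ _)
      refine ⟨⟨h1, h2⟩, ⟨le_trans hk0 h1, htx⟩, ?_, ?_⟩
      · rw [phiPerm_eq hn σ k h1 h2]; linarith
      · rw [phiPerm_eq hn σ k h1 h2]; linarith
  rw [hIco, volIcoIic _ _ _ (by gcongr; linarith)]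

lemma min_diff_nonneg (e u v : ℝ) (h : u ≤ v) : 0 ≤ min e v - min e u :=
  sub_nonneg.mpr (min_le_min (le_refl e) h)

lemma min_diff_le (e u v : ℝ) (h : u ≤ v) : min e v - min e u ≤ v - u := by
  rcases le_total e u with he | he
  · rw [min_eq_left he, min_eq_left (he.trans h)]; linarith
  · rw [min_eq_right he]
    have := min_le_left e v
    linarith [min_le_right e v]

lemma term_eq_zero (N x y a a' : ℝ) (hN : 0 < N) (hx : ¬(a < x ∧ x < a + 1/N)) :
    N * ((min x (a + 1/N) - min x a) * (min y (a' + 1/N) - min y a')) -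
      (min (min x (y + a - a')) (a + 1/N) - min (min x (y + a - a')) a) = 0 := by
  have h1N : (0:ℝ) < 1/N := by positivity
  rcases not_and_or.mp hx with h | h
  · push_neg at h
    have h1 : min x (a + 1/N) = x := min_eq_left (by linarith)
    have h2 : min x a = x := min_eq_left h
    have he : min x (y + a - a') ≤ a := le_trans (min_le_left _ _) h
    rw [h1, h2, min_eq_left (he.trans (by linarith)), min_eq_left he]
    ring
  · push_neg at h
    have h1 : min x (a + 1/N) = a + 1/N := min_eq_right h
    have h2 : min x a = a := min_eq_right (by linarith)
    set c := y + a - a' with hc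
    have hcb : min (min x c) (a + 1/N) = min c (a + 1/N) := by
      rw [min_comm x c, min_assoc, h1]
    have hca : min (min x c) a = min c a := by
      rw [min_comm x c, min_assoc, h2]
    have e1 : min c (a + 1/N) = min y (a' + 1/N) + (a - a') := by
      rw [← min_add_add_right y (a' + 1/N) (a - a')]
      congr 1
      · rw [hc]; ring
      · ring
    have e2 : min c a = min y a' + (a - a') := by
      rw [← min_add_add_right y a' (a - a')]
      congr 1
      · rw [hc]; ring
      · ring
    rw [h1, h2, hcb, hca, e1, e2]
    have hN' : N ≠ 0 := ne_of_gt hN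
    field_simp
    ring

lemma term_bound (N x y a a' : ℝ) (hN : 0 < N) :
    |N * ((min x (a + 1/N) - min x a) * (min y (a' + 1/N) - min y a')) -
      (min (min x (y + a - a')) (a + 1/N) - min (min x (y + a - a')) a)| ≤ 2/N := by
  have h1N : (0:ℝ) < 1/N := by positivity
  have hab : a ≤ a + 1/N := by linarith
  have hab' : a' ≤ a' + 1/N := by linarith
  have hdx0 := min_diff_nonneg x a (a + 1/N) hab
  have hdx1 := min_diff_le x a (a + 1/N) hab
  have hdy0 := min_diff_nonneg y a' (a' + 1/N) hab'
  have hdy1 := min_diff_le y a' (a' + 1/N) hab'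
  have hm0 := min_diff_nonneg (min x (y + a - a')) a (a + 1/N) hab
  have hm1 := min_diff_le (min x (y + a - a')) a (a + 1/N) hab
  have hp0 : 0 ≤ N * ((min x (a + 1/N) - min x a) * (min y (a' + 1/N) - min y a')) := by
    positivity
  have hp1 : N * ((min x (a + 1/N) - min x a) * (min y (a' + 1/N) - min y a')) ≤ 1/N := by
    have h1 : (min x (a + 1/N) - min x a) * (min y (a' + 1/N) - min y a') ≤ (1/N) * (1/N) := by
      apply mul_le_mul (by linarith) (by linarith) hdy0 (by linarith)
    calc N * ((min x (a + 1/N) - min x a) * (min y (a' + 1/N) - min y a')) ≤ N * ((1/N) * (1/N)) := by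
          exact mul_le_mul_of_nonneg_left h1 hN.le
      _ = 1/N := by field_simp
  have h2N : 2/N = 2*(1/N) := by ring
  rw [abs_le]
  constructor <;> linarith


/-- The Kolmogorov distance between `μ_σ` and `(Id, φ_σ)_* Leb` is at most `2/n`. -/
theorem stmt9 (n : ℕ) (hn : 0 < n) (σ : Equiv.Perm (Fin n)) :
    ∀ x ∈ Set.Icc (0:ℝ) 1, ∀ y ∈ Set.Icc (0:ℝ) 1,
      |(permMeasure n hn σ (Set.Icc 0 x ×ˢ Set.Icc 0 y)).toReal -
        ((Measure.map (fun t => (t, phiPerm n hn σ t)) (volume.restrict (Set.Icc 0 1)))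
          (Set.Icc 0 x ×ˢ Set.Icc 0 y)).toReal| ≤ 2 / n := by
  intro x hx y hy
  have hn' : (0:ℝ) < n := Nat.cast_pos.mpr hn
  have hdiv : ∀ m : ℕ, ((m:ℝ)+1)/n = (m:ℝ)/n + 1/n := fun m => by ring
  rw [P_eq hn σ hx hy, M_eq hn σ hx hy,
    ENNReal.toReal_sum (fun k _ => ENNReal.mul_ne_top (ENNReal.natCast_ne_top n)
      (ENNReal.mul_ne_top ENNReal.ofReal_ne_top ENNReal.ofReal_ne_top)),
    ENNReal.toReal_sum (fun k _ => ENNReal.ofReal_ne_top)]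
  have hP : ∀ k : Fin n, (((n:ENNReal)) *
      (ENNReal.ofReal (min x (((k:ℝ)+1)/n) - min x ((k:ℝ)/n)) *
       ENNReal.ofReal (min y ((((σ k : ℕ):ℝ)+1)/n) - min y (((σ k : ℕ):ℝ)/n)))).toReal =
      (n:ℝ) * ((min x ((k:ℝ)/n + 1/n) - min x ((k:ℝ)/n)) *
       (min y (((σ k : ℕ):ℝ)/n + 1/n) - min y (((σ k : ℕ):ℝ)/n))) := by
    intro k
    have hab : (k:ℝ)/n ≤ ((k:ℝ)+1)/n := by gcongr; linarith
    have hab' : ((σ k : ℕ):ℝ)/n ≤ (((σ k : ℕ):ℝ)+1)/n := by gcongr; linarith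
    rw [ENNReal.toReal_mul, ENNReal.toReal_mul,
      ENNReal.toReal_ofReal (min_diff_nonneg _ _ _ hab),
      ENNReal.toReal_ofReal (min_diff_nonneg _ _ _ hab'), hdiv, hdiv]
    rfl
  have hM : ∀ k : Fin n, (ENNReal.ofReal
        (min (min x (y + (k:ℝ)/n - ((σ k : ℕ):ℝ)/n)) (((k:ℝ)+1)/n) -
         min (min x (y + (k:ℝ)/n - ((σ k : ℕ):ℝ)/n)) ((k:ℝ)/n))).toReal =
      min (min x (y + (k:ℝ)/n - ((σ k : ℕ):ℝ)/n)) ((k:ℝ)/n + 1/n) -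
         min (min x (y + (k:ℝ)/n - ((σ k : ℕ):ℝ)/n)) ((k:ℝ)/n) := by
    intro k
    have hab : (k:ℝ)/n ≤ ((k:ℝ)+1)/n := by gcongr; linarith
    rw [ENNReal.toReal_ofReal (min_diff_nonneg _ _ _ hab), hdiv]
  rw [Finset.sum_congr rfl (fun k _ => hP k), Finset.sum_congr rfl (fun k _ => hM k),
    ← Finset.sum_sub_distrib]
  by_cases hex : ∃ k : Fin n, (k:ℝ)/n < x ∧ x < (k:ℝ)/n + 1/n
  · obtain ⟨k0, hk0⟩ := hex
    rw [Finset.sum_eq_single k0]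
    · exact term_bound (n:ℝ) x y ((k0:ℝ)/n) (((σ k0 : ℕ):ℝ)/n) hn'
    · intro k _ hne
      apply term_eq_zero (n:ℝ) x y ((k:ℝ)/n) (((σ k : ℕ):ℝ)/n) hn'
      rintro ⟨h1, h2⟩
      apply hne
      have e1 : ((k:ℕ):ℝ) < n * x := by rw [div_lt_iff₀ hn'] at h1; linarith
      have e2 : (n:ℝ) * x < (k:ℕ) + 1 := by
        have : x < ((k:ℝ)+1)/n := by rw [hdiv]; exact h2
        rw [lt_div_iff₀ hn'] at this; linarith
      have e3 : ((k0:ℕ):ℝ) < n * x := by rw [div_lt_iff₀ hn'] at hk0; linarith [hk0.1]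
      have e4 : (n:ℝ) * x < (k0:ℕ) + 1 := by
        have : x < ((k0:ℝ)+1)/n := by rw [hdiv]; exact hk0.2
        rw [lt_div_iff₀ hn'] at this; linarith
      have f1 : ((k:ℕ):ℝ) < ((k0:ℕ):ℝ) + 1 := by linarith
      have f2 : ((k0:ℕ):ℝ) < ((k:ℕ):ℝ) + 1 := by linarith
      have g1 : (k:ℕ) < (k0:ℕ) + 1 := by exact_mod_cast f1
      have g2 : (k0:ℕ) < (k:ℕ) + 1 := by exact_mod_cast f2
      exact Fin.ext (by omega)
    · intro h
      exact absurd (Finset.mem_univ k0) h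
  · push_neg at hex
    have hz : ∀ k ∈ Finset.univ (α := Fin n),
        (n:ℝ) * ((min x ((k:ℝ)/n + 1/n) - min x ((k:ℝ)/n)) *
          (min y (((σ k : ℕ):ℝ)/n + 1/n) - min y (((σ k : ℕ):ℝ)/n))) -
        (min (min x (y + (k:ℝ)/n - ((σ k : ℕ):ℝ)/n)) ((k:ℝ)/n + 1/n) -
          min (min x (y + (k:ℝ)/n - ((σ k : ℕ):ℝ)/n)) ((k:ℝ)/n)) = 0 := by
      intro k _
      apply term_eq_zero (n:ℝ) x y ((k:ℝ)/n) (((σ k : ℕ):ℝ)/n) hn'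
      rintro ⟨h1, h2⟩
      exact absurd h2 (not_lt.mpr (hex k h1))
    rw [Finset.sum_eq_zero hz]
    simp only [abs_zero]
    positivity


end
end

section
/- Let (g,s) be a signed excursion satisfying property (A). Then the strict versions of the nesting relations hold: if [a_j,c_j] ⊆ (a_i,b_i) then (s_i = ⊕ implies [a'_j,c'_j] ⊆ (a'_i,b'_i)) and (s_i = ⊖ implies [a'_j,c'_j] ⊆ (b'_i,c'_i)); if [a_j,c_j] ⊆ (b_i,c_i) then the analogous statements hold with (b'_i,c'_i) and (a'_i,b'_i) exchanged; and if [a_i,c_i] ∩ [a_j,c_j] = ∅ then [a'_i,c'_i] ∩ [a'_j,c'_j] = ∅. -/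
open MeasureTheory Set

noncomputable section

namespace Work

variable {g : ℝ → ℝ} {b : ℕ → ℝ} {s : ℕ → Bool}

lemma innerOfStrict {β : ℝ} (h : IsStrictLocalMin g β) : IsInnerLocalMin g β := by
  obtain ⟨hβ, ε, hε, H⟩ := h
  refine ⟨hβ, ε, hε, fun x hx => ?_⟩
  rcases eq_or_ne x β with rfl | hne
  · exact le_rfl
  · exact le_of_lt (H x hx hne)

lemma slm_eq (hg : IsCRT g) {β γ : ℝ} (h1 : IsStrictLocalMin g β) (h2 : IsStrictLocalMin g γ)
    (hv : g β = g γ) : β = γ :=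
  hg.distinct β γ (innerOfStrict h1) (innerOfStrict h2) hv

lemma slm_eps {β : ℝ} (h : IsStrictLocalMin g β) :
    ∃ ε > 0, ε ≤ β ∧ ε ≤ 1 - β ∧ ∀ x, β - ε < x → x < β + ε → x ≠ β → g β < g x := by
  obtain ⟨⟨h0, h1⟩, ε, hε, H⟩ := h
  refine ⟨min ε (min β (1-β)), lt_min hε (lt_min h0 (by linarith)), (min_le_right _ _).trans (min_le_left _ _),
    (min_le_right _ _).trans (min_le_right _ _), fun x hx1 hx2 hne => ?_⟩
  have l1 : min ε (min β (1-β)) ≤ ε := min_le_left _ _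
  exact H x ⟨by linarith, by linarith⟩ hne

lemma aPt_spec (hg : IsCRT g) {β : ℝ} (hβ : IsStrictLocalMin g β) :
    0 < aPt g β ∧ aPt g β < β ∧ g (aPt g β) = g β ∧
      ∀ t, aPt g β < t → t < β → g β < g t := by
  obtain ⟨ε, hε, hεβ, hεβ', H⟩ := slm_eps hβ
  have hβ0 : 0 < β := lt_of_lt_of_le hε hεβ
  have hβ1 : β < 1 := by linarith
  have hgβ : 0 < g β := hg.pos β ⟨hβ0, hβ1⟩
  set S := {t : ℝ | t < β ∧ g t = g β} with hS
  have hgx₀ : g β < g (β - ε/2) := H _ (by linarith) (by linarith) (by intro h; linarith)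
  have hcont : ContinuousOn g (Icc 0 (β - ε/2)) :=
    hg.cont.mono (Icc_subset_Icc le_rfl (by linarith))
  have hmemI : g β ∈ Icc (g 0) (g (β - ε/2)) := by
    rw [hg.zero0]; exact ⟨le_of_lt hgβ, le_of_lt hgx₀⟩
  obtain ⟨t, htmem, hgt⟩ := intermediate_value_Icc (by linarith : (0:ℝ) ≤ β - ε/2) hcont hmemI
  have ht0 : t ≠ 0 := by intro h; rw [h, hg.zero0] at hgt; linarith
  have htpos : 0 < t := lt_of_le_of_ne htmem.1 (Ne.symm ht0)
  have htS : t ∈ S := ⟨by linarith [htmem.2], hgt⟩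
  have hbdd : BddAbove S := ⟨β, fun r hr => le_of_lt hr.1⟩
  have hne : S.Nonempty := ⟨t, htS⟩
  have hub : ∀ r ∈ S, r ≤ β - ε := by
    intro r hr
    by_contra hcon
    push_neg at hcon
    exact absurd hr.2 (ne_of_gt (H r (by linarith) (by linarith [hr.1]) (ne_of_lt hr.1)))
  have haPt_le : aPt g β ≤ β - ε := csSup_le hne hub
  have haPt_ge : t ≤ aPt g β := le_csSup hbdd htS
  have hpos : 0 < aPt g β := lt_of_lt_of_le htpos haPt_ge
  have hlt : aPt g β < β := by linarith
  have hval : g (aPt g β) = g β := by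
    by_contra hne'
    have hmem : aPt g β ∈ Icc (0:ℝ) 1 := ⟨le_of_lt hpos, by linarith⟩
    have hcw : ContinuousWithinAt g (Icc 0 1) (aPt g β) := hg.cont.continuousWithinAt hmem
    have hd : 0 < dist (g β) (g (aPt g β)) := dist_pos.2 (Ne.symm hne')
    obtain ⟨δ, hδ, hδ'⟩ := Metric.continuousWithinAt_iff.1 hcw _ hd
    have hmax : max (aPt g β - δ) (aPt g β / 2) < aPt g β := max_lt (by linarith) (by linarith)
    obtain ⟨r, hrS, hr⟩ := exists_lt_of_lt_csSup hne hmax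
    have hr_le : r ≤ aPt g β := le_csSup hbdd hrS
    have h01 : r ∈ Icc (0:ℝ) 1 := ⟨by
        have := le_max_right (aPt g β - δ) (aPt g β / 2); linarith, by linarith⟩
    have hdist : dist r (aPt g β) < δ := by
      rw [Real.dist_eq, abs_lt]
      constructor
      · have := le_max_left (aPt g β - δ) (aPt g β / 2); linarith
      · linarith
    have := hδ' h01 hdist
    rw [hrS.2] at this
    exact lt_irrefl _ this
  refine ⟨hpos, hlt, hval, fun r h1 h2 => ?_⟩
  have hrS : r ∉ S := fun h => absurd (le_csSup hbdd h) (not_le.2 h1)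
  have hne2 : g r ≠ g β := fun h => hrS ⟨h2, h⟩
  rcases lt_or_gt_of_ne hne2 with hlt2 | hgt2
  · exfalso
    set x₁ := (max r (β - ε) + β)/2 with hx₁
    have hM : max r (β - ε) < β := max_lt h2 (by linarith)
    have hx₁l : max r (β - ε) < x₁ := by simp only [hx₁]; linarith
    have hx₁r : x₁ < β := by simp only [hx₁]; linarith
    have hx₁ε : β - ε < x₁ := lt_of_le_of_lt (le_max_right r (β-ε)) hx₁l
    have hgx₁ : g β < g x₁ := H x₁ hx₁ε (by linarith) (ne_of_lt hx₁r)
    have hrx : r ≤ x₁ := le_of_lt (lt_of_le_of_lt (le_max_left _ _) hx₁l)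
    have hcont2 : ContinuousOn g (Icc r x₁) :=
      hg.cont.mono (Icc_subset_Icc (by linarith : (0:ℝ) ≤ r) (by linarith))
    obtain ⟨w, hw, hgw⟩ := intermediate_value_Icc hrx hcont2 ⟨le_of_lt hlt2, le_of_lt hgx₁⟩
    have hwS : w ∈ S := ⟨by linarith [hw.2], hgw⟩
    have hws2 : w ≤ aPt g β := le_csSup hbdd hwS
    linarith [hw.1]
  · exact hgt2

lemma cPt_spec (hg : IsCRT g) {β : ℝ} (hβ : IsStrictLocalMin g β) :
    β < cPt g β ∧ cPt g β < 1 ∧ g (cPt g β) = g β ∧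
      ∀ t, β < t → t < cPt g β → g β < g t := by
  obtain ⟨ε, hε, hεβ, hεβ', H⟩ := slm_eps hβ
  have hβ0 : 0 < β := lt_of_lt_of_le hε hεβ
  have hβ1 : β < 1 := by linarith
  have hgβ : 0 < g β := hg.pos β ⟨hβ0, hβ1⟩
  set S := {t : ℝ | β < t ∧ g t = g β} with hS
  have hgx₀ : g β < g (β + ε/2) := H _ (by linarith) (by linarith) (by intro h; linarith)
  have hcont : ContinuousOn g (Icc (β + ε/2) 1) :=
    hg.cont.mono (Icc_subset_Icc (by linarith) le_rfl)
  have hmemI : g β ∈ Icc (g 1) (g (β + ε/2)) := by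
    rw [hg.zero1]; exact ⟨le_of_lt hgβ, le_of_lt hgx₀⟩
  obtain ⟨t, htmem, hgt⟩ := intermediate_value_Icc' (by linarith : β + ε/2 ≤ 1) hcont hmemI
  have ht1 : t ≠ 1 := by intro h; rw [h, hg.zero1] at hgt; linarith
  have htlt : t < 1 := lt_of_le_of_ne htmem.2 ht1
  have htS : t ∈ S := ⟨by linarith [htmem.1], hgt⟩
  have hbdd : BddBelow S := ⟨β, fun r hr => le_of_lt hr.1⟩
  have hne : S.Nonempty := ⟨t, htS⟩
  have hlb : ∀ r ∈ S, β + ε ≤ r := by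
    intro r hr
    by_contra hcon
    push_neg at hcon
    exact absurd hr.2 (ne_of_gt (H r (by linarith [hr.1]) (by linarith) (ne_of_gt hr.1)))
  have hc_ge : β + ε ≤ cPt g β := le_csInf hne hlb
  have hc_le : cPt g β ≤ t := csInf_le hbdd htS
  have hclt : cPt g β < 1 := lt_of_le_of_lt hc_le htlt
  have hcgt : β < cPt g β := by linarith
  have hval : g (cPt g β) = g β := by
    by_contra hne'
    have hmem : cPt g β ∈ Icc (0:ℝ) 1 := ⟨by linarith, le_of_lt hclt⟩
    have hcw : ContinuousWithinAt g (Icc 0 1) (cPt g β) := hg.cont.continuousWithinAt hmem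
    have hd : 0 < dist (g β) (g (cPt g β)) := dist_pos.2 (Ne.symm hne')
    obtain ⟨δ, hδ, hδ'⟩ := Metric.continuousWithinAt_iff.1 hcw _ hd
    have hmin : cPt g β < min (cPt g β + δ) 1 := lt_min (by linarith) hclt
    obtain ⟨r, hrS, hr⟩ := exists_lt_of_csInf_lt hne hmin
    have hr_ge : cPt g β ≤ r := csInf_le hbdd hrS
    have h01 : r ∈ Icc (0:ℝ) 1 := ⟨by linarith, le_of_lt (lt_of_lt_of_le hr (min_le_right _ _))⟩
    have hdist : dist r (cPt g β) < δ := by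
      rw [Real.dist_eq, abs_lt]
      have := lt_of_lt_of_le hr (min_le_left _ _)
      constructor <;> linarith
    have := hδ' h01 hdist
    rw [hrS.2] at this
    exact lt_irrefl _ this
  refine ⟨hcgt, hclt, hval, fun r h1 h2 => ?_⟩
  have hrS : r ∉ S := fun h => absurd (csInf_le hbdd h) (not_le.2 h2)
  have hne2 : g r ≠ g β := fun h => hrS ⟨h1, h⟩
  rcases lt_or_gt_of_ne hne2 with hlt2 | hgt2
  · exfalso
    set x₁ := (β + min r (β + ε))/2 with hx₁
    have hM : β < min r (β + ε) := lt_min h1 (by linarith)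
    have hx₁l : β < x₁ := by simp only [hx₁]; linarith
    have hx₁r : x₁ < min r (β + ε) := by simp only [hx₁]; linarith
    have hx₁ε : x₁ < β + ε := lt_of_lt_of_le hx₁r (min_le_right _ _)
    have hgx₁ : g β < g x₁ := H x₁ (by linarith) (by linarith) (ne_of_gt hx₁l)
    have hrx : x₁ ≤ r := le_of_lt (lt_of_lt_of_le hx₁r (min_le_left _ _))
    have hcont2 : ContinuousOn g (Icc x₁ r) :=
      hg.cont.mono (Icc_subset_Icc (by linarith : (0:ℝ) ≤ x₁) (by
        have h2' : r < cPt g β := h2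
        linarith))
    obtain ⟨w, hw, hgw⟩ := intermediate_value_Icc' hrx hcont2 ⟨le_of_lt hlt2, le_of_lt hgx₁⟩
    have hwS : w ∈ S := ⟨by linarith [hw.1], hgw⟩
    have hws2 : cPt g β ≤ w := csInf_le hbdd hwS
    linarith [hw.2]
  · exact hgt2

lemma slm_b (hb : IsEnum g b) (i : ℕ) : IsStrictLocalMin g (b i) := (hb.2 (b i)).2 ⟨i, rfl⟩

lemma idx_eq (hg : IsCRT g) (hb : IsEnum g b) {k l : ℕ} (h : g (b k) = g (b l)) : k = l :=
  hb.1 (slm_eq hg (slm_b hb k) (slm_b hb l) h)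

lemma aI_spec (hg : IsCRT g) (hb : IsEnum g b) (i : ℕ) :
    0 < aI g b i ∧ aI g b i < b i ∧ g (aI g b i) = g (b i) ∧
      ∀ t, aI g b i < t → t < b i → g (b i) < g t := aPt_spec hg (slm_b hb i)

lemma cI_spec (hg : IsCRT g) (hb : IsEnum g b) (i : ℕ) :
    b i < cI g b i ∧ cI g b i < 1 ∧ g (cI g b i) = g (b i) ∧
      ∀ t, b i < t → t < cI g b i → g (b i) < g t := cPt_spec hg (slm_b hb i)

lemma exc_ge (hg : IsCRT g) (hb : IsEnum g b) (i : ℕ) :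
    ∀ t ∈ Icc (aI g b i) (cI g b i), g (b i) ≤ g t := by
  obtain ⟨ha0, ha1, ha2, ha3⟩ := aI_spec hg hb i
  obtain ⟨hc0, hc1, hc2, hc3⟩ := cI_spec hg hb i
  intro t ht
  rcases lt_trichotomy t (b i) with h | h | h
  · rcases eq_or_lt_of_le ht.1 with h' | h'
    · rw [← h', ha2]
    · exact le_of_lt (ha3 t h' h)
  · rw [h]
  · rcases eq_or_lt_of_le ht.2 with h' | h'
    · rw [h', hc2]
    · exact le_of_lt (hc3 t h h')

lemma exc_eq (hg : IsCRT g) (hb : IsEnum g b) (i : ℕ) :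
    ∀ t ∈ Icc (aI g b i) (cI g b i), g t = g (b i) →
      t = aI g b i ∨ t = b i ∨ t = cI g b i := by
  obtain ⟨ha0, ha1, ha2, ha3⟩ := aI_spec hg hb i
  obtain ⟨hc0, hc1, hc2, hc3⟩ := cI_spec hg hb i
  intro t ht hv
  rcases lt_trichotomy t (b i) with h | h | h
  · left
    rcases eq_or_lt_of_le ht.1 with h' | h'
    · exact h'.symm
    · exact absurd hv (ne_of_gt (ha3 t h' h))
  · right; left; exact h
  · right; right
    rcases eq_or_lt_of_le ht.2 with h' | h'
    · exact h'
    · exact absurd hv (ne_of_gt (hc3 t h h'))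

lemma mrca_extend_right {γ u x y : ℝ} (h : IsMrca g γ u x) (huy : u < y)
    (hseg : ∀ t, min x y ≤ t → t ≤ max x y → g γ < g t) : IsMrca g γ u y := by
  obtain ⟨hux, hγmem, hslm, hmin, huniq⟩ := h
  have hγy : γ < y := by
    rcases le_or_gt x y with hxy | hyx
    · exact lt_of_lt_of_le hγmem.2 hxy
    · by_contra hcon
      push_neg at hcon
      exact lt_irrefl _ (hseg γ (le_trans (min_le_right x y) hcon)
        (le_trans (le_of_lt hγmem.2) (le_max_left x y)))
  refine ⟨huy, ⟨hγmem.1, hγy⟩, hslm, ?_, ?_⟩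
  · intro t ht
    rcases le_or_gt t x with h1 | h2
    · exact hmin t ⟨ht.1, h1⟩
    · exact le_of_lt (hseg t (le_of_lt (lt_of_le_of_lt (min_le_left x y) h2))
        (le_trans ht.2 (le_max_right x y)))
  · intro t ht hv
    rcases le_or_gt t x with h1 | h2
    · exact huniq t ⟨ht.1, h1⟩ hv
    · exact absurd hv (ne_of_gt (hseg t (le_of_lt (lt_of_le_of_lt (min_le_left x y) h2))
        (le_trans ht.2 (le_max_right x y))))

lemma mrca_extend_left {γ u x y : ℝ} (h : IsMrca g γ x u) (hyu : y < u)
    (hseg : ∀ t, min x y ≤ t → t ≤ max x y → g γ < g t) : IsMrca g γ y u := by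
  obtain ⟨hxu, hγmem, hslm, hmin, huniq⟩ := h
  have hγy : y < γ := by
    rcases le_or_gt y x with hxy | hyx
    · exact lt_of_le_of_lt hxy hγmem.1
    · by_contra hcon
      push_neg at hcon
      exact lt_irrefl _ (hseg γ (le_trans (min_le_left x y) (le_of_lt hγmem.1)) (le_trans hcon (le_max_right x y)))
  refine ⟨hyu, ⟨hγy, hγmem.2⟩, hslm, ?_, ?_⟩
  · intro t ht
    rcases le_or_gt x t with h1 | h2
    · exact hmin t ⟨h1, ht.2⟩
    · exact le_of_lt (hseg t (le_trans (min_le_right x y) ht.1)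
        (le_of_lt (lt_of_lt_of_le h2 (le_max_left x y))))
  · intro t ht hv
    rcases le_or_gt x t with h1 | h2
    · exact huniq t ⟨h1, ht.2⟩ hv
    · exact absurd hv (ne_of_gt (hseg t (le_trans (min_le_right x y) ht.1)
        (le_of_lt (lt_of_lt_of_le h2 (le_max_left x y)))))

lemma mrca_restrict_right {γ u x y : ℝ} (h : IsMrca g γ u y) (hγx : γ < x) (hxy : x ≤ y) :
    IsMrca g γ u x := by
  obtain ⟨huy, hγmem, hslm, hmin, huniq⟩ := h
  exact ⟨lt_trans hγmem.1 hγx, ⟨hγmem.1, hγx⟩, hslm,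
    fun t ht => hmin t ⟨ht.1, le_trans ht.2 hxy⟩,
    fun t ht hv => huniq t ⟨ht.1, le_trans ht.2 hxy⟩ hv⟩

lemma mrca_restrict_left {γ u x y : ℝ} (h : IsMrca g γ y u) (hxγ : x < γ) (hyx : y ≤ x) :
    IsMrca g γ x u := by
  obtain ⟨hyu, hγmem, hslm, hmin, huniq⟩ := h
  exact ⟨lt_trans hxγ hγmem.2, ⟨hxγ, hγmem.2⟩, hslm,
    fun t ht => hmin t ⟨le_trans hyx ht.1, ht.2⟩,
    fun t ht hv => huniq t ⟨le_trans hyx ht.1, ht.2⟩ hv⟩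

lemma not_tri_closed (hg : IsCRT g) (hb : IsEnum g b) (i : ℕ) :
    ∀ u ∈ Icc (aI g b i) (cI g b i), ¬ Tri g b s u (aI g b i) := by
  obtain ⟨ha0, ha1, ha2, ha3⟩ := aI_spec hg hb i
  rintro u hu ⟨l, hm | hm⟩
  · exact absurd hm.1.1 (not_lt.2 hu.1)
  · obtain ⟨⟨hlt, hγmem, hslm, hmin, huniq⟩, hsl⟩ := hm
    have h1 : g (b l) ≤ g (aI g b i) := hmin _ ⟨le_rfl, le_of_lt hlt⟩
    have h2 : g (b i) ≤ g (b l) := exc_ge hg hb i _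
      ⟨le_of_lt hγmem.1, le_trans (le_of_lt hγmem.2) hu.2⟩
    have hv : g (b l) = g (b i) := le_antisymm (by rw [ha2] at h1; exact h1) h2
    have := huniq _ ⟨le_rfl, le_of_lt hlt⟩ (by rw [ha2, hv])
    exact absurd this (ne_of_lt hγmem.1)

lemma not_tri_cI (hg : IsCRT g) (hb : IsEnum g b) (i : ℕ) :
    ∀ v ∈ Ioo (aI g b i) (cI g b i), ¬ Tri g b s (cI g b i) v := by
  obtain ⟨hc0, hc1, hc2, hc3⟩ := cI_spec hg hb i
  rintro v hv ⟨l, hm | hm⟩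
  · exact absurd hm.1.1 (not_lt.2 (le_of_lt hv.2))
  · obtain ⟨⟨hlt, hγmem, hslm, hmin, huniq⟩, hsl⟩ := hm
    have h1 : g (b l) ≤ g (cI g b i) := hmin _ ⟨le_of_lt hlt, le_rfl⟩
    have h2 : g (b i) ≤ g (b l) := exc_ge hg hb i _
      ⟨le_trans (le_of_lt hv.1) (le_of_lt hγmem.1), le_of_lt hγmem.2⟩
    have hveq : g (b l) = g (b i) := le_antisymm (by rw [hc2] at h1; exact h1) h2
    have := huniq _ ⟨le_of_lt hlt, le_rfl⟩ (by rw [hc2, hveq])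
    exact absurd this (ne_of_gt hγmem.2)

lemma not_tri_aI (hg : IsCRT g) (hb : IsEnum g b) (i : ℕ) :
    ∀ v ∈ Ioo (aI g b i) (cI g b i), ¬ Tri g b s (aI g b i) v := by
  obtain ⟨ha0, ha1, ha2, ha3⟩ := aI_spec hg hb i
  rintro v hv ⟨l, hm | hm⟩
  · obtain ⟨⟨hlt, hγmem, hslm, hmin, huniq⟩, hsl⟩ := hm
    have h1 : g (b l) ≤ g (aI g b i) := hmin _ ⟨le_rfl, le_of_lt hlt⟩
    have h2 : g (b i) ≤ g (b l) := exc_ge hg hb i _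
      ⟨le_of_lt hγmem.1, le_trans (le_of_lt hγmem.2) (le_of_lt hv.2)⟩
    have hveq : g (b l) = g (b i) := le_antisymm (by rw [ha2] at h1; exact h1) h2
    have := huniq _ ⟨le_rfl, le_of_lt hlt⟩ (by rw [ha2, hveq])
    exact absurd this (ne_of_lt hγmem.1)
  · exact absurd hm.1.1 (not_lt.2 (le_of_lt hv.1))

lemma tri_inside (hg : IsCRT g) (hb : IsEnum g b) (i : ℕ) {u v : ℝ}
    (hu : u ∈ Ioo (aI g b i) (b i)) (hv : v ∈ Ioo (b i) (cI g b i)) :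
    (Tri g b s u v ↔ s i = true) ∧ (Tri g b s v u ↔ s i = false) := by
  obtain ⟨ha0, ha1, ha2, ha3⟩ := aI_spec hg hb i
  obtain ⟨hc0, hc1, hc2, hc3⟩ := cI_spec hg hb i
  have huv : u < v := lt_trans hu.2 hv.1
  have hm : IsMrca g (b i) u v := by
    refine ⟨huv, ⟨hu.2, hv.1⟩, slm_b hb i, ?_, ?_⟩
    · intro t ht
      rcases le_or_gt t (b i) with h | h
      · rcases eq_or_lt_of_le h with h' | h'
        · rw [h']
        · exact le_of_lt (ha3 t (lt_of_lt_of_le hu.1 ht.1) h')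
      · exact le_of_lt (hc3 t h (lt_of_le_of_lt ht.2 hv.2))
    · intro t ht hveq
      rcases lt_trichotomy t (b i) with h | h | h
      · exact absurd hveq (ne_of_gt (ha3 t (lt_of_lt_of_le hu.1 ht.1) h))
      · exact h
      · exact absurd hveq (ne_of_gt (hc3 t h (lt_of_le_of_lt ht.2 hv.2)))
  have haux : ∀ l, IsMrca g (b l) u v → l = i := by
    intro l hm'
    have h1 : g (b l) ≤ g (b i) := hm'.2.2.2.1 _ ⟨le_of_lt hu.2, le_of_lt hv.1⟩
    have h2 : g (b i) ≤ g (b l) := exc_ge hg hb i _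
      ⟨le_trans (le_of_lt hu.1) (le_of_lt hm'.2.1.1), le_trans (le_of_lt hm'.2.1.2) (le_of_lt hv.2)⟩
    exact idx_eq hg hb (le_antisymm h1 h2)
  constructor
  · constructor
    · rintro ⟨l, hc | hc⟩
      · rw [← haux l hc.1]; exact hc.2
      · exact absurd hc.1.1 (not_lt.2 (le_of_lt huv))
    · intro h; exact ⟨i, Or.inl ⟨hm, h⟩⟩
  · constructor
    · rintro ⟨l, hc | hc⟩
      · exact absurd hc.1.1 (not_lt.2 (le_of_lt huv))
      · rw [← haux l hc.1]; exact hc.2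
    · intro h; exact ⟨i, Or.inr ⟨hm, h⟩⟩

lemma tri_iff_outside (hg : IsCRT g) (hb : IsEnum g b) (i j : ℕ) {u : ℝ}
    (haj : aI g b j ∈ Ioo (aI g b i) (cI g b i))
    (hu : u < aI g b i ∨ cI g b i < u) :
    (Tri g b s u (aI g b i) ↔ Tri g b s u (aI g b j)) := by
  obtain ⟨ha0, ha1, ha2, ha3⟩ := aI_spec hg hb i
  obtain ⟨hc0, hc1, hc2, hc3⟩ := cI_spec hg hb i
  have hseg : ∀ t ∈ Icc (aI g b i) (aI g b j), g (b i) ≤ g t := fun t ht =>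
    exc_ge hg hb i t ⟨ht.1, le_trans ht.2 (le_of_lt haj.2)⟩
  have hminmax : min (aI g b i) (aI g b j) = aI g b i := min_eq_left (le_of_lt haj.1)
  have hmaxmax : max (aI g b i) (aI g b j) = aI g b j := max_eq_right (le_of_lt haj.1)
  rcases hu with hu | hu
  · constructor
    · rintro ⟨l, hc | hc⟩
      · obtain ⟨hm, hsl⟩ := hc
        have hγle : g (b l) ≤ g (b i) := by
          rw [← ha2]; exact hm.2.2.2.1 _ ⟨le_of_lt hm.1, le_rfl⟩
        have hγlt : g (b l) < g (b i) := by
          rcases eq_or_lt_of_le hγle with h | h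
          · exfalso
            have := idx_eq hg hb h
            subst this
            exact absurd hm.2.1.2 (not_lt.2 (le_of_lt ha1))
          · exact h
        refine ⟨l, Or.inl ⟨mrca_extend_right hm (lt_trans hu haj.1) ?_, hsl⟩⟩
        intro t h1 h2
        rw [hminmax] at h1; rw [hmaxmax] at h2
        exact lt_of_lt_of_le hγlt (hseg t ⟨h1, h2⟩)
      · exact absurd hc.1.1 (not_lt.2 (le_of_lt hu))
    · rintro ⟨l, hc | hc⟩
      · obtain ⟨hm, hsl⟩ := hc
        have hγaj : b l < aI g b j := hm.2.1.2
        have hγlt : b l < aI g b i := by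
          by_contra hcon
          push_neg at hcon
          have hγv : g (b l) = g (b i) := by
            have hle : g (b l) ≤ g (aI g b i) := hm.2.2.2.1 _ ⟨le_of_lt hu, le_of_lt haj.1⟩
            have hge : g (b i) ≤ g (b l) := hseg _ ⟨hcon, le_of_lt hγaj⟩
            rw [ha2] at hle
            exact le_antisymm hle hge
          have heqp : aI g b i = b l :=
            hm.2.2.2.2 _ ⟨le_of_lt hu, le_of_lt haj.1⟩ (by rw [ha2, hγv])
          have : b l = b i := slm_eq hg hm.2.2.1 (slm_b hb i) hγv
          rw [this] at heqp
          exact absurd heqp (ne_of_lt ha1)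
        have hγval : g (b l) < g (b i) := by
          have hle : g (b l) ≤ g (aI g b i) := hm.2.2.2.1 _ ⟨le_of_lt hu, le_of_lt haj.1⟩
          rw [ha2] at hle
          rcases eq_or_lt_of_le hle with h | h
          · exfalso
            have := idx_eq hg hb h
            subst this
            exact absurd hγlt (not_lt.2 (le_of_lt ha1))
          · exact h
        exact ⟨l, Or.inl ⟨mrca_restrict_right hm hγlt (le_of_lt haj.1), hsl⟩⟩
      · exact absurd hc.1.1 (not_lt.2 (le_of_lt (lt_trans hu haj.1)))
  · have haju : aI g b j < u := lt_trans haj.2 hu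
    have haiu : aI g b i < u := lt_trans haj.1 haju
    constructor
    · rintro ⟨l, hc | hc⟩
      · exact absurd hc.1.1 (not_lt.2 (le_of_lt haiu))
      · obtain ⟨hm, hsl⟩ := hc
        have hγgt : cI g b i < b l := by
          by_contra hcon
          push_neg at hcon
          have hγv : g (b l) = g (b i) := by
            have hle : g (b l) ≤ g (aI g b i) := hm.2.2.2.1 _ ⟨le_rfl, le_of_lt hm.1⟩
            have hge : g (b i) ≤ g (b l) := exc_ge hg hb i _ ⟨le_of_lt hm.2.1.1, hcon⟩
            rw [ha2] at hle
            exact le_antisymm hle hge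
          have heqp : aI g b i = b l :=
            hm.2.2.2.2 _ ⟨le_rfl, le_of_lt hm.1⟩ (by rw [ha2, hγv])
          exact absurd heqp.symm (ne_of_gt hm.2.1.1)
        have hγval : g (b l) < g (b i) := by
          have hle : g (b l) ≤ g (aI g b i) := hm.2.2.2.1 _ ⟨le_rfl, le_of_lt hm.1⟩
          rw [ha2] at hle
          rcases eq_or_lt_of_le hle with h | h
          · exfalso
            have := idx_eq hg hb h
            subst this
            exact absurd hγgt (not_lt.2 (le_of_lt hc0))
          · exact h
        refine ⟨l, Or.inr ⟨mrca_extend_left hm haju ?_, hsl⟩⟩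
        intro t h1 h2
        rw [hminmax] at h1; rw [hmaxmax] at h2
        exact lt_of_lt_of_le hγval (hseg t ⟨h1, h2⟩)
    · rintro ⟨l, hc | hc⟩
      · exact absurd hc.1.1 (not_lt.2 (le_of_lt haju))
      · obtain ⟨hm, hsl⟩ := hc
        have hciu : g (b l) ≤ g (cI g b i) :=
          hm.2.2.2.1 _ ⟨le_of_lt haj.2, le_of_lt hu⟩
        have hγgt : cI g b i < b l := by
          by_contra hcon
          push_neg at hcon
          have hγv : g (b l) = g (b i) := by
            have hge : g (b i) ≤ g (b l) := exc_ge hg hb i _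
              ⟨le_trans (le_of_lt haj.1) (le_of_lt hm.2.1.1), hcon⟩
            rw [hc2] at hciu
            exact le_antisymm hciu hge
          have heqp : cI g b i = b l :=
            hm.2.2.2.2 _ ⟨le_of_lt haj.2, le_of_lt hu⟩ (by rw [hc2, hγv])
          have : b l = b i := slm_eq hg hm.2.2.1 (slm_b hb i) hγv
          rw [this] at heqp
          exact absurd heqp (ne_of_gt hc0)
        have hγval : g (b l) < g (b i) := by
          rw [hc2] at hciu
          rcases eq_or_lt_of_le hciu with h | h
          · exfalso
            have := idx_eq hg hb h
            subst this
            exact absurd hγgt (not_lt.2 (le_of_lt hc0))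
          · exact h
        refine ⟨l, Or.inr ⟨mrca_extend_left hm (lt_trans haj.1 haju) ?_, hsl⟩⟩
        intro t h1 h2
        rw [min_comm, hminmax] at h1; rw [max_comm, hmaxmax] at h2
        exact lt_of_lt_of_le hγval (hseg t ⟨h1, h2⟩)

def U (g : ℝ → ℝ) (b : ℕ → ℝ) (s : ℕ → Bool) (t : ℝ) : Set ℝ :=
  {u | u ∈ Icc (0:ℝ) 1 ∧ Tri g b s u t}

lemma phi_eq (t : ℝ) : phi g b s t = (volume (U g b s t)).toReal := rfl

lemma U_vol_le (t : ℝ) : volume (U g b s t) ≤ 1 := by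
  refine le_trans (measure_mono (fun u hu => hu.1)) ?_
  rw [Real.volume_Icc]
  simp

lemma U_vol_ne_top (t : ℝ) : volume (U g b s t) ≠ ⊤ :=
  ne_top_of_le_ne_top ENNReal.one_ne_top (U_vol_le t)

lemma phi_mono {x y : ℝ} (h : U g b s x ⊆ U g b s y) : phi g b s x ≤ phi g b s y :=
  ENNReal.toReal_mono (U_vol_ne_top y) (measure_mono h)

lemma phi_le3 {x y p1 q1 p2 q2 p3 q3 : ℝ}
    (hsub : U g b s y ⊆ U g b s x ∪ Icc p1 q1 ∪ Icc p2 q2 ∪ Icc p3 q3)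
    (h1 : p1 ≤ q1) (h2 : p2 ≤ q2) (h3 : p3 ≤ q3) :
    phi g b s y ≤ phi g b s x + (q1 - p1) + (q2 - p2) + (q3 - p3) := by
  have hb1 : volume (U g b s y) ≤ volume (U g b s x) + ENNReal.ofReal (q1 - p1)
      + ENNReal.ofReal (q2 - p2) + ENNReal.ofReal (q3 - p3) := by
    calc volume (U g b s y)
        ≤ volume (U g b s x ∪ Icc p1 q1 ∪ Icc p2 q2 ∪ Icc p3 q3) := measure_mono hsub
      _ ≤ volume (U g b s x ∪ Icc p1 q1 ∪ Icc p2 q2) + volume (Icc p3 q3) := measure_union_le _ _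
      _ ≤ (volume (U g b s x ∪ Icc p1 q1) + volume (Icc p2 q2)) + volume (Icc p3 q3) :=
          add_le_add (measure_union_le _ _) le_rfl
      _ ≤ ((volume (U g b s x) + volume (Icc p1 q1)) + volume (Icc p2 q2)) + volume (Icc p3 q3) :=
          add_le_add (add_le_add (measure_union_le _ _) le_rfl) le_rfl
      _ = volume (U g b s x) + ENNReal.ofReal (q1 - p1) + ENNReal.ofReal (q2 - p2)
          + ENNReal.ofReal (q3 - p3) := by rw [Real.volume_Icc, Real.volume_Icc, Real.volume_Icc]
  have hne : volume (U g b s x) + ENNReal.ofReal (q1 - p1) + ENNReal.ofReal (q2 - p2)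
      + ENNReal.ofReal (q3 - p3) ≠ ⊤ := by
    simp [ENNReal.add_ne_top, U_vol_ne_top x]
  have := ENNReal.toReal_mono hne hb1
  rw [ENNReal.toReal_add, ENNReal.toReal_add, ENNReal.toReal_add,
    ENNReal.toReal_ofReal (by linarith), ENNReal.toReal_ofReal (by linarith),
    ENNReal.toReal_ofReal (by linarith)] at this
  · exact this
  all_goals simp [ENNReal.add_ne_top, U_vol_ne_top x]

lemma phi_ge {x y p q : ℝ} (hUxy : U g b s x ⊆ U g b s y) (hI : Ioo p q ⊆ U g b s y)
    (hd : ∀ u ∈ Ioo p q, u ∉ U g b s x) (hpq : p ≤ q) :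
    phi g b s x + (q - p) ≤ phi g b s y := by
  have hdisj : Disjoint (U g b s x) (Ioo p q) :=
    Set.disjoint_left.2 fun u hu hu' => hd u hu' hu
  have hun : volume (U g b s x ∪ Ioo p q) = volume (U g b s x) + ENNReal.ofReal (q - p) := by
    rw [measure_union hdisj measurableSet_Ioo, Real.volume_Ioo]
  have hle : volume (U g b s x) + ENNReal.ofReal (q - p) ≤ volume (U g b s y) := by
    rw [← hun]; exact measure_mono (union_subset hUxy hI)
  have := ENNReal.toReal_mono (U_vol_ne_top y) hle
  rw [ENNReal.toReal_add (U_vol_ne_top x) ENNReal.ofReal_ne_top,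
    ENNReal.toReal_ofReal (by linarith)] at this
  exact this

lemma aI'_def (i : ℕ) : aI' g b s i = phi g b s (aI g b i) := rfl

lemma cI'_def (i : ℕ) : cI' g b s i = phi g b s (aI g b i) + (cI g b i - aI g b i) := rfl

lemma bI'_true (i : ℕ) (h : s i = true) :
    bI' g b s i = phi g b s (aI g b i) + (b i - aI g b i) := by
  unfold bI'
  rw [h]
  rfl

lemma bI'_false (i : ℕ) (h : s i = false) :
    bI' g b s i = phi g b s (aI g b i) + (cI g b i - b i) := by
  unfold bI'
  rw [h]
  rfl

/-- interval of `j` strictly inside interval of `i` (either side): non-strict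
shuffled nesting of endpoints. -/
lemma N0 (hg : IsCRT g) (hb : IsEnum g b) {i j : ℕ}
    (h : Icc (aI g b j) (cI g b j) ⊆ Ioo (aI g b i) (cI g b i)) :
    aI' g b s i ≤ aI' g b s j ∧ cI' g b s j ≤ cI' g b s i := by
  obtain ⟨haj0, haj1, haj2, haj3⟩ := aI_spec hg hb j
  obtain ⟨hcj0, hcj1, hcj2, hcj3⟩ := cI_spec hg hb j
  have hajcj : aI g b j ≤ cI g b j := le_of_lt (lt_trans haj1 hcj0)
  have hajIoo : aI g b j ∈ Ioo (aI g b i) (cI g b i) := h ⟨le_rfl, hajcj⟩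
  have hcjIoo : cI g b j ∈ Ioo (aI g b i) (cI g b i) := h ⟨hajcj, le_rfl⟩
  have hUsub : U g b s (aI g b i) ⊆ U g b s (aI g b j) := by
    rintro u ⟨h01, htri⟩
    rcases lt_or_ge u (aI g b i) with h' | h'
    · exact ⟨h01, (tri_iff_outside hg hb i j hajIoo (Or.inl h')).1 htri⟩
    · rcases le_or_gt u (cI g b i) with h'' | h''
      · exact absurd htri (not_tri_closed hg hb i u ⟨h', h''⟩)
      · exact ⟨h01, (tri_iff_outside hg hb i j hajIoo (Or.inr h'')).1 htri⟩
  have hUsub2 : U g b s (aI g b j) ⊆ U g b s (aI g b i) ∪ Icc (aI g b i) (aI g b j)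
      ∪ Icc (cI g b j) (cI g b i) ∪ Icc (aI g b i) (aI g b i) := by
    rintro u ⟨h01, htri⟩
    rcases lt_or_ge u (aI g b i) with h' | h'
    · exact Or.inl (Or.inl (Or.inl ⟨h01, (tri_iff_outside hg hb i j hajIoo (Or.inl h')).2 htri⟩))
    · rcases le_or_gt u (aI g b j) with h2 | h2
      · exact Or.inl (Or.inl (Or.inr ⟨h', h2⟩))
      · rcases le_or_gt u (cI g b j) with h3 | h3
        · exact absurd htri (not_tri_closed hg hb j u ⟨le_of_lt h2, h3⟩)
        · rcases le_or_gt u (cI g b i) with h4 | h4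
          · exact Or.inl (Or.inr ⟨le_of_lt h3, h4⟩)
          · exact Or.inl (Or.inl (Or.inl ⟨h01,
              (tri_iff_outside hg hb i j hajIoo (Or.inr h4)).2 htri⟩))
  refine ⟨phi_mono hUsub, ?_⟩
  have := phi_le3 hUsub2 (le_of_lt hajIoo.1) (le_of_lt hcjIoo.2) le_rfl
  rw [cI'_def, cI'_def]
  linarith

/-- interval of `j` inside the left half `(a_i, b_i)` : sign-dependent bounds. -/
lemma N1 (hg : IsCRT g) (hb : IsEnum g b) {i j : ℕ}
    (h : Icc (aI g b j) (cI g b j) ⊆ Ioo (aI g b i) (b i)) :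
    aI' g b s i ≤ aI' g b s j ∧ cI' g b s j ≤ cI' g b s i ∧
      (s i = true → cI' g b s j ≤ bI' g b s i) ∧
      (s i = false → bI' g b s i ≤ aI' g b s j) := by
  obtain ⟨hai0, hai1, hai2, hai3⟩ := aI_spec hg hb i
  obtain ⟨hci0, hci1, hci2, hci3⟩ := cI_spec hg hb i
  obtain ⟨haj0, haj1, haj2, haj3⟩ := aI_spec hg hb j
  obtain ⟨hcj0, hcj1, hcj2, hcj3⟩ := cI_spec hg hb j
  have hajcj : aI g b j ≤ cI g b j := le_of_lt (lt_trans haj1 hcj0)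
  have hsub0 : Icc (aI g b j) (cI g b j) ⊆ Ioo (aI g b i) (cI g b i) := fun t ht =>
    ⟨(h ht).1, lt_trans (h ht).2 hci0⟩
  have haj : aI g b j ∈ Ioo (aI g b i) (b i) := h ⟨le_rfl, hajcj⟩
  have hcj : cI g b j ∈ Ioo (aI g b i) (b i) := h ⟨hajcj, le_rfl⟩
  have hajIoo : aI g b j ∈ Ioo (aI g b i) (cI g b i) := hsub0 ⟨le_rfl, hajcj⟩
  obtain ⟨hN1, hN2⟩ := N0 (s := s) hg hb hsub0
  refine ⟨hN1, hN2, ?_, ?_⟩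
  · intro hsi
    have hUsub3 : U g b s (aI g b j) ⊆ U g b s (aI g b i) ∪ Icc (aI g b i) (aI g b j)
        ∪ Icc (cI g b j) (b i) ∪ Icc (aI g b i) (aI g b i) := by
      rintro u ⟨h01, htri⟩
      rcases lt_or_ge u (aI g b i) with h' | h'
      · exact Or.inl (Or.inl (Or.inl ⟨h01, (tri_iff_outside hg hb i j hajIoo (Or.inl h')).2 htri⟩))
      · rcases le_or_gt u (aI g b j) with h2 | h2
        · exact Or.inl (Or.inl (Or.inr ⟨h', h2⟩))
        · rcases le_or_gt u (cI g b j) with h3 | h3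
          · exact absurd htri (not_tri_closed hg hb j u ⟨le_of_lt h2, h3⟩)
          · rcases le_or_gt u (b i) with h4 | h4
            · exact Or.inl (Or.inr ⟨le_of_lt h3, h4⟩)
            · rcases lt_or_ge u (cI g b i) with h5 | h5
              · exfalso
                have hf : s i = false := ((tri_inside hg hb i haj ⟨h4, h5⟩).2).mp htri
                simp [hsi] at hf
              · rcases eq_or_lt_of_le h5 with h6 | h6
                · exfalso
                  rw [← h6] at htri
                  exact not_tri_cI hg hb i _ ⟨haj.1, lt_trans haj.2 hci0⟩ htri
                · exact Or.inl (Or.inl (Or.inl ⟨h01,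
                    (tri_iff_outside hg hb i j hajIoo (Or.inr h6)).2 htri⟩))
    have := phi_le3 hUsub3 (le_of_lt haj.1) (le_of_lt hcj.2) le_rfl
    rw [cI'_def, bI'_true i hsi]
    linarith
  · intro hsi
    have hI : Ioo (b i) (cI g b i) ⊆ U g b s (aI g b j) := by
      intro u hu
      refine ⟨⟨le_of_lt (lt_trans (lt_trans hai0 hai1) hu.1), le_of_lt (lt_trans hu.2 hci1)⟩, ?_⟩
      exact ((tri_inside hg hb i haj hu).2).2 hsi
    have hd : ∀ u ∈ Ioo (b i) (cI g b i), u ∉ U g b s (aI g b i) := by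
      intro u hu hmem
      exact not_tri_closed hg hb i u ⟨le_of_lt (lt_trans hai1 hu.1), le_of_lt hu.2⟩ hmem.2
    have hUsub : U g b s (aI g b i) ⊆ U g b s (aI g b j) := by
      rintro u ⟨h01, htri⟩
      rcases lt_or_ge u (aI g b i) with h' | h'
      · exact ⟨h01, (tri_iff_outside hg hb i j hajIoo (Or.inl h')).1 htri⟩
      · rcases le_or_gt u (cI g b i) with h'' | h''
        · exact absurd htri (not_tri_closed hg hb i u ⟨h', h''⟩)
        · exact ⟨h01, (tri_iff_outside hg hb i j hajIoo (Or.inr h'')).1 htri⟩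
    have := phi_ge hUsub hI hd (le_of_lt hci0)
    rw [bI'_false i hsi, aI'_def]
    linarith

/-- interval of `j` inside the right half `(b_i, c_i)` : sign-dependent bounds. -/
lemma N2 (hg : IsCRT g) (hb : IsEnum g b) {i j : ℕ}
    (h : Icc (aI g b j) (cI g b j) ⊆ Ioo (b i) (cI g b i)) :
    aI' g b s i ≤ aI' g b s j ∧ cI' g b s j ≤ cI' g b s i ∧
      (s i = true → bI' g b s i ≤ aI' g b s j) ∧
      (s i = false → cI' g b s j ≤ bI' g b s i) := by
  obtain ⟨hai0, hai1, hai2, hai3⟩ := aI_spec hg hb i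
  obtain ⟨hci0, hci1, hci2, hci3⟩ := cI_spec hg hb i
  obtain ⟨haj0, haj1, haj2, haj3⟩ := aI_spec hg hb j
  obtain ⟨hcj0, hcj1, hcj2, hcj3⟩ := cI_spec hg hb j
  have hajcj : aI g b j ≤ cI g b j := le_of_lt (lt_trans haj1 hcj0)
  have hsub0 : Icc (aI g b j) (cI g b j) ⊆ Ioo (aI g b i) (cI g b i) := fun t ht =>
    ⟨lt_trans hai1 (h ht).1, (h ht).2⟩
  have haj : aI g b j ∈ Ioo (b i) (cI g b i) := h ⟨le_rfl, hajcj⟩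
  have hcj : cI g b j ∈ Ioo (b i) (cI g b i) := h ⟨hajcj, le_rfl⟩
  have hajIoo : aI g b j ∈ Ioo (aI g b i) (cI g b i) := hsub0 ⟨le_rfl, hajcj⟩
  obtain ⟨hN1, hN2⟩ := N0 (s := s) hg hb hsub0
  refine ⟨hN1, hN2, ?_, ?_⟩
  · intro hsi
    have hI : Ioo (aI g b i) (b i) ⊆ U g b s (aI g b j) := by
      intro u hu
      refine ⟨⟨le_of_lt (lt_trans hai0 hu.1), le_of_lt (lt_trans (lt_trans hu.2 hci0) hci1)⟩, ?_⟩
      exact ((tri_inside hg hb i hu haj).1).2 hsi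
    have hd : ∀ u ∈ Ioo (aI g b i) (b i), u ∉ U g b s (aI g b i) := by
      intro u hu hmem
      exact not_tri_closed hg hb i u ⟨le_of_lt hu.1, le_of_lt (lt_trans hu.2 hci0)⟩ hmem.2
    have hUsub : U g b s (aI g b i) ⊆ U g b s (aI g b j) := by
      rintro u ⟨h01, htri⟩
      rcases lt_or_ge u (aI g b i) with h' | h'
      · exact ⟨h01, (tri_iff_outside hg hb i j hajIoo (Or.inl h')).1 htri⟩
      · rcases le_or_gt u (cI g b i) with h'' | h''
        · exact absurd htri (not_tri_closed hg hb i u ⟨h', h''⟩)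
        · exact ⟨h01, (tri_iff_outside hg hb i j hajIoo (Or.inr h'')).1 htri⟩
    have := phi_ge hUsub hI hd (le_of_lt hai1)
    rw [bI'_true i hsi, aI'_def]
    linarith
  · intro hsi
    have hUsub3 : U g b s (aI g b j) ⊆ U g b s (aI g b i) ∪ Icc (b i) (aI g b j)
        ∪ Icc (cI g b j) (cI g b i) ∪ Icc (aI g b i) (aI g b i) := by
      rintro u ⟨h01, htri⟩
      rcases lt_or_ge u (aI g b i) with h' | h'
      · exact Or.inl (Or.inl (Or.inl ⟨h01, (tri_iff_outside hg hb i j hajIoo (Or.inl h')).2 htri⟩))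
      · rcases eq_or_lt_of_le h' with h1 | h1
        · exact Or.inr ⟨le_of_eq h1, le_of_eq h1.symm⟩
        · rcases lt_or_ge u (b i) with h2 | h2
          · exfalso
            have ht : s i = true := ((tri_inside hg hb i ⟨h1, h2⟩ haj).1).mp htri
            simp [hsi] at ht
          · rcases le_or_gt u (aI g b j) with h3 | h3
            · exact Or.inl (Or.inl (Or.inr ⟨h2, h3⟩))
            · rcases le_or_gt u (cI g b j) with h4 | h4
              · exact absurd htri (not_tri_closed hg hb j u ⟨le_of_lt h3, h4⟩)
              · rcases le_or_gt u (cI g b i) with h5 | h5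
                · exact Or.inl (Or.inr ⟨le_of_lt h4, h5⟩)
                · exact Or.inl (Or.inl (Or.inl ⟨h01,
                    (tri_iff_outside hg hb i j hajIoo (Or.inr h5)).2 htri⟩))
    have := phi_le3 hUsub3 (le_of_lt haj.1) (le_of_lt hcj.2) le_rfl
    rw [cI'_def, bI'_false i hsi]
    linarith

lemma inner_strict (hg : IsCRT g) {t : ℝ} (h : IsInnerLocalMin g t) : IsStrictLocalMin g t := by
  obtain ⟨⟨h0, h1⟩, ε, hε, H⟩ := h
  set ε' := min ε (min t (1 - t)) with hε'
  have hε'pos : 0 < ε' := lt_min hε (lt_min h0 (by linarith))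
  have hε'1 : ε' ≤ ε := min_le_left _ _
  have hε'2 : ε' ≤ t := (min_le_right _ _).trans (min_le_left _ _)
  have hε'3 : ε' ≤ 1 - t := (min_le_right _ _).trans (min_le_right _ _)
  refine ⟨⟨h0, h1⟩, ε', hε'pos, fun x hx hne => ?_⟩
  have hle : g t ≤ g x := H x ⟨by linarith [hx.1], by linarith [hx.2]⟩
  rcases eq_or_lt_of_le hle with heq | hlt
  · exfalso
    have hxin : IsInnerLocalMin g x := by
      refine ⟨⟨by linarith [hx.1], by linarith [hx.2]⟩,
        min (x - (t - ε')) ((t + ε') - x), lt_min (by linarith [hx.1]) (by linarith [hx.2]),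
        fun y hy => ?_⟩
      have l1 : min (x - (t - ε')) ((t + ε') - x) ≤ x - (t - ε') := min_le_left _ _
      have l2 : min (x - (t - ε')) ((t + ε') - x) ≤ (t + ε') - x := min_le_right _ _
      rw [← heq]
      exact H y ⟨by linarith [hy.1], by linarith [hy.2]⟩
    have hter : IsInnerLocalMin g t := ⟨⟨h0, h1⟩, ε, hε, H⟩
    exact hne (hg.distinct x t hxin hter heq.symm)
  · exact hlt

lemma inner_nested (hg : IsCRT g) (hb : IsEnum g b) {i j : ℕ} (hij : i ≠ j)
    (hbj : b j ∈ Ioo (aI g b i) (cI g b i)) :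
    Icc (aI g b j) (cI g b j) ⊆ Ioo (aI g b i) (cI g b i) ∧ b i ∉ Icc (aI g b j) (cI g b j) := by
  obtain ⟨hai0, hai1, hai2, hai3⟩ := aI_spec hg hb i
  obtain ⟨hci0, hci1, hci2, hci3⟩ := cI_spec hg hb i
  have hgne : g (b i) ≠ g (b j) := fun hv => hij (idx_eq hg hb hv)
  have hgt : g (b i) < g (b j) :=
    lt_of_le_of_ne (exc_ge hg hb i _ ⟨le_of_lt hbj.1, le_of_lt hbj.2⟩) hgne
  obtain ⟨ε, hε, hεβ, hεβ', H⟩ := slm_eps (slm_b hb j)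
  -- left: a_j > a_i
  have haj_gt : aI g b i < aI g b j := by
    set δ := min ε (b j - aI g b i) / 2 with hδ
    have hδpos : 0 < δ := by
      apply div_pos (lt_min hε _) (by norm_num)
      linarith [hbj.1]
    have hδ1 : δ < ε := by
      have := min_le_left ε (b j - aI g b i); linarith
    have hδ2 : δ < b j - aI g b i := by
      have := min_le_right ε (b j - aI g b i); linarith
    have hx₀ : g (b j) < g (b j - δ) := H _ (by linarith) (by linarith) (by intro hcon; linarith)
    have hcont : ContinuousOn g (Icc (aI g b i) (b j - δ)) :=
      hg.cont.mono (Icc_subset_Icc (le_of_lt hai0) (by linarith [hεβ']))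
    obtain ⟨t, htmem, hgt'⟩ := intermediate_value_Icc (by linarith : aI g b i ≤ b j - δ) hcont
      (by rw [hai2]; exact ⟨le_of_lt hgt, le_of_lt hx₀⟩)
    have htne : t ≠ aI g b i := by
      intro hcon; rw [hcon, hai2] at hgt'; exact hgne hgt'
    have htS : t ∈ {r : ℝ | r < b j ∧ g r = g (b j)} := ⟨by linarith [htmem.2], hgt'⟩
    have hbdd : BddAbove {r : ℝ | r < b j ∧ g r = g (b j)} := ⟨b j, fun r hr => le_of_lt hr.1⟩
    have := le_csSup hbdd htS
    have ht_gt : aI g b i < t := lt_of_le_of_ne htmem.1 (Ne.symm htne)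
    exact lt_of_lt_of_le ht_gt this
  -- right: c_j < c_i
  have hcj_lt : cI g b j < cI g b i := by
    set δ := min ε (cI g b i - b j) / 2 with hδ
    have hδpos : 0 < δ := by
      apply div_pos (lt_min hε _) (by norm_num)
      linarith [hbj.2]
    have hδ1 : δ < ε := by
      have := min_le_left ε (cI g b i - b j); linarith
    have hδ2 : δ < cI g b i - b j := by
      have := min_le_right ε (cI g b i - b j); linarith
    have hx₀ : g (b j) < g (b j + δ) := H _ (by linarith) (by linarith) (by intro hcon; linarith)
    have hcont : ContinuousOn g (Icc (b j + δ) (cI g b i)) :=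
      hg.cont.mono (Icc_subset_Icc (by linarith [hεβ]) (le_of_lt hci1))
    obtain ⟨t, htmem, hgt'⟩ := intermediate_value_Icc' (by linarith : b j + δ ≤ cI g b i) hcont
      (by rw [hci2]; exact ⟨le_of_lt hgt, le_of_lt hx₀⟩)
    have htne : t ≠ cI g b i := by
      intro hcon; rw [hcon, hci2] at hgt'; exact hgne hgt'
    have htS : t ∈ {r : ℝ | b j < r ∧ g r = g (b j)} := ⟨by linarith [htmem.1], hgt'⟩
    have hbdd : BddBelow {r : ℝ | b j < r ∧ g r = g (b j)} := ⟨b j, fun r hr => le_of_lt hr.1⟩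
    have := csInf_le hbdd htS
    have ht_lt : t < cI g b i := lt_of_le_of_ne htmem.2 htne
    exact lt_of_le_of_lt this ht_lt
  constructor
  · intro t ht
    exact ⟨lt_of_lt_of_le haj_gt ht.1, lt_of_le_of_lt ht.2 hcj_lt⟩
  · intro hmem
    exact absurd (exc_ge hg hb j _ hmem) (not_le.2 hgt)

lemma bj_Ioo (hg : IsCRT g) (hb : IsEnum g b) {i j : ℕ} (hij : i ≠ j)
    (hbj : b j ∈ Icc (aI g b i) (cI g b i)) : b j ∈ Ioo (aI g b i) (cI g b i) := by
  obtain ⟨hai0, hai1, hai2, hai3⟩ := aI_spec hg hb i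
  obtain ⟨hci0, hci1, hci2, hci3⟩ := cI_spec hg hb i
  have hgne : g (b i) ≠ g (b j) := fun hv => hij (idx_eq hg hb hv)
  constructor
  · rcases eq_or_lt_of_le hbj.1 with h | h
    · exact absurd (by rw [← h, hai2]) (Ne.symm hgne)
    · exact h
  · rcases eq_or_lt_of_le hbj.2 with h | h
    · exact absurd (by rw [h, hci2]) (Ne.symm hgne)
    · exact h

lemma trichotomy (hg : IsCRT g) (hb : IsEnum g b) {i j : ℕ} (hij : i ≠ j) :
    Icc (aI g b j) (cI g b j) ⊆ Ioo (aI g b i) (b i) ∨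
    Icc (aI g b j) (cI g b j) ⊆ Ioo (b i) (cI g b i) ∨
    Icc (aI g b i) (cI g b i) ⊆ Ioo (aI g b j) (b j) ∨
    Icc (aI g b i) (cI g b i) ⊆ Ioo (b j) (cI g b j) ∨
    Icc (aI g b i) (cI g b i) ∩ Icc (aI g b j) (cI g b j) = ∅ := by
  obtain ⟨hai0, hai1, hai2, hai3⟩ := aI_spec hg hb i
  obtain ⟨hci0, hci1, hci2, hci3⟩ := cI_spec hg hb i
  obtain ⟨haj0, haj1, haj2, haj3⟩ := aI_spec hg hb j
  obtain ⟨hcj0, hcj1, hcj2, hcj3⟩ := cI_spec hg hb j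
  have hgne : g (b i) ≠ g (b j) := fun hv => hij (idx_eq hg hb hv)
  by_cases hbj : b j ∈ Icc (aI g b i) (cI g b i)
  · obtain ⟨hnest, hbnot⟩ := inner_nested hg hb hij (bj_Ioo hg hb hij hbj)
    rcases lt_or_ge (b i) (aI g b j) with hcase | hcase
    · right; left
      intro t ht
      exact ⟨lt_of_lt_of_le hcase ht.1, (hnest ht).2⟩
    · left
      have hcj_lt : cI g b j < b i := by
        by_contra hcon
        push_neg at hcon
        exact hbnot ⟨hcase, hcon⟩
      intro t ht
      exact ⟨(hnest ht).1, lt_of_le_of_lt ht.2 hcj_lt⟩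
  · by_cases hbi : b i ∈ Icc (aI g b j) (cI g b j)
    · obtain ⟨hnest, hbnot⟩ := inner_nested hg hb hij.symm (bj_Ioo hg hb hij.symm hbi)
      rcases lt_or_ge (b j) (aI g b i) with hcase | hcase
      · right; right; right; left
        intro t ht
        exact ⟨lt_of_lt_of_le hcase ht.1, (hnest ht).2⟩
      · right; right; left
        have hci_lt : cI g b i < b j := by
          by_contra hcon
          push_neg at hcon
          exact hbnot ⟨hcase, hcon⟩
        intro t ht
        exact ⟨(hnest ht).1, lt_of_le_of_lt ht.2 hci_lt⟩
    · right; right; right; right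
      have hbj' : b j < aI g b i ∨ cI g b i < b j := by
        by_contra hcon
        push_neg at hcon
        exact hbj ⟨hcon.1, hcon.2⟩
      rcases hbj' with hcase | hcase
      · have hcj_lt : cI g b j < aI g b i := by
          rcases lt_or_ge (cI g b j) (aI g b i) with h' | h'
          · exact h'
          · exfalso
            have hne1 : aI g b i ≠ cI g b j := by
              intro hcon; apply hgne; rw [← hai2, hcon, hcj2]
            have hlt1 : aI g b i < cI g b j := lt_of_le_of_ne h' hne1
            have hval1 : g (b j) < g (aI g b i) := hcj3 _ hcase hlt1
            rw [hai2] at hval1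
            have hbi_gt : cI g b j < b i := by
              rcases lt_or_ge (cI g b j) (b i) with h'' | h''
              · exact h''
              · exact absurd ⟨by linarith [haj1, hai1], h''⟩ hbi
            have hval2 := hai3 _ hlt1 hbi_gt
            rw [hcj2] at hval2
            linarith
        apply eq_empty_iff_forall_notMem.2
        rintro x ⟨hx1, hx2⟩
        linarith [hx1.1, hx2.2]
      · have haj_gt : cI g b i < aI g b j := by
          rcases lt_or_ge (cI g b i) (aI g b j) with h' | h'
          · exact h'
          · exfalso
            have hne1 : aI g b j ≠ cI g b i := by
              intro hcon; apply hgne; rw [← hci2, ← hcon, haj2]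
            have hlt1 : aI g b j < cI g b i := lt_of_le_of_ne h' hne1
            have hval1 : g (b j) < g (cI g b i) := haj3 _ hlt1 hcase
            rw [hci2] at hval1
            have hbi_lt : b i < aI g b j := by
              rcases lt_or_ge (b i) (aI g b j) with h'' | h''
              · exact h''
              · exact absurd ⟨h'', by linarith [hcj0, hci0]⟩ hbi
            have hval2 := hci3 _ hbi_lt hlt1
            rw [haj2] at hval2
            linarith
        apply eq_empty_iff_forall_notMem.2
        rintro x ⟨hx1, hx2⟩
        linarith [hx1.2, hx2.1]

/-- The common ancestor of two disjoint (ordered) excursion intervals. -/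
lemma ancestor (hg : IsCRT g) (hb : IsEnum g b) {i j : ℕ}
    (hord : cI g b i < aI g b j) :
    ∃ m, m ≠ i ∧ m ≠ j ∧ Icc (aI g b i) (cI g b i) ⊆ Ioo (aI g b m) (b m) ∧
      Icc (aI g b j) (cI g b j) ⊆ Ioo (b m) (cI g b m) := by
  obtain ⟨hai0, hai1, hai2, hai3⟩ := aI_spec hg hb i
  obtain ⟨hci0, hci1, hci2, hci3⟩ := cI_spec hg hb i
  obtain ⟨haj0, haj1, haj2, haj3⟩ := aI_spec hg hb j
  obtain ⟨hcj0, hcj1, hcj2, hcj3⟩ := cI_spec hg hb j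
  set K := Icc (cI g b i) (aI g b j) with hK
  have hKne : K.Nonempty := nonempty_Icc.2 (le_of_lt hord)
  have hKcont : ContinuousOn g K := hg.cont.mono
    (Icc_subset_Icc (by linarith) (by linarith))
  obtain ⟨t0, ht0K, ht0min'⟩ := isCompact_Icc.exists_isMinOn hKne hKcont
  have ht0min : ∀ x ∈ K, g t0 ≤ g x := fun x hx => ht0min' hx
  -- interior minimizers are strict local minima
  have hmin_slm : ∀ t, t ∈ Ioo (cI g b i) (aI g b j) → (∀ x ∈ K, g t ≤ g x) →
      IsStrictLocalMin g t := by
    intro t htI htm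
    apply inner_strict hg
    refine ⟨⟨by linarith [htI.1], by linarith [htI.2]⟩,
      min (t - cI g b i) (aI g b j - t), lt_min (by linarith [htI.1]) (by linarith [htI.2]),
      fun x hx => ?_⟩
    have l1 : min (t - cI g b i) (aI g b j - t) ≤ t - cI g b i := min_le_left _ _
    have l2 : min (t - cI g b i) (aI g b j - t) ≤ aI g b j - t := min_le_right _ _
    exact htm x ⟨by linarith [hx.1], by linarith [hx.2]⟩
  -- the minimum is strictly below both g (b i) and g (b j)
  have hlt_i : g t0 < g (b i) := by
    have h1 : g t0 ≤ g (b i) := by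
      rw [← hci2]; exact ht0min _ ⟨le_rfl, le_of_lt hord⟩
    rcases eq_or_lt_of_le h1 with heq | hlt
    · exfalso
      have hcin : IsInnerLocalMin g (cI g b i) := by
        refine ⟨⟨by linarith, hci1⟩, min (cI g b i - b i) (aI g b j - cI g b i),
          lt_min (by linarith) (by linarith), fun x hx => ?_⟩
        have l1 : min (cI g b i - b i) (aI g b j - cI g b i) ≤ cI g b i - b i := min_le_left _ _
        have l2 : min (cI g b i - b i) (aI g b j - cI g b i) ≤ aI g b j - cI g b i :=
          min_le_right _ _
        rcases le_or_gt x (cI g b i) with hc | hc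
        · rcases eq_or_lt_of_le hc with hc' | hc'
          · rw [hc']
          · rw [hci2]; exact le_of_lt (hci3 x (by linarith [hx.1]) hc')
        · rw [hci2, ← heq]
          exact ht0min x ⟨le_of_lt hc, by linarith [hx.2]⟩
      have : cI g b i = b i :=
        slm_eq hg (inner_strict hg hcin) (slm_b hb i) hci2
      linarith
    · exact hlt
  have hlt_j : g t0 < g (b j) := by
    have h1 : g t0 ≤ g (b j) := by
      rw [← haj2]; exact ht0min _ ⟨le_of_lt hord, le_rfl⟩
    rcases eq_or_lt_of_le h1 with heq | hlt
    · exfalso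
      have hain : IsInnerLocalMin g (aI g b j) := by
        refine ⟨⟨by linarith, by linarith⟩, min (aI g b j - cI g b i) (b j - aI g b j),
          lt_min (by linarith) (by linarith), fun x hx => ?_⟩
        have l1 : min (aI g b j - cI g b i) (b j - aI g b j) ≤ aI g b j - cI g b i := min_le_left _ _
        have l2 : min (aI g b j - cI g b i) (b j - aI g b j) ≤ b j - aI g b j := min_le_right _ _
        rcases le_or_gt x (aI g b j) with hc | hc
        · rw [haj2, ← heq]
          exact ht0min x ⟨by linarith [hx.1], hc⟩
        · rw [haj2]; exact le_of_lt (haj3 x hc (by linarith [hx.2]))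
      have : aI g b j = b j :=
        slm_eq hg (inner_strict hg hain) (slm_b hb j) haj2
      linarith
    · exact hlt
  have ht0c : t0 ≠ cI g b i := by
    intro hcon; rw [hcon, hci2] at hlt_i; exact lt_irrefl _ hlt_i
  have ht0a : t0 ≠ aI g b j := by
    intro hcon; rw [hcon, haj2] at hlt_j; exact lt_irrefl _ hlt_j
  have ht0I : t0 ∈ Ioo (cI g b i) (aI g b j) :=
    ⟨lt_of_le_of_ne ht0K.1 (Ne.symm ht0c), lt_of_le_of_ne ht0K.2 ht0a⟩
  have hslm0 : IsStrictLocalMin g t0 := hmin_slm t0 ht0I ht0min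
  have huniq : ∀ t ∈ K, g t = g t0 → t = t0 := by
    intro t htK hv
    have htc : t ≠ cI g b i := by
      intro hcon; rw [hcon, hci2] at hv; rw [hv] at hlt_i; exact lt_irrefl _ hlt_i
    have hta : t ≠ aI g b j := by
      intro hcon; rw [hcon, haj2] at hv; rw [hv] at hlt_j; exact lt_irrefl _ hlt_j
    have htI : t ∈ Ioo (cI g b i) (aI g b j) :=
      ⟨lt_of_le_of_ne htK.1 (Ne.symm htc), lt_of_le_of_ne htK.2 hta⟩
    have htm : ∀ x ∈ K, g t ≤ g x := fun x hx => hv ▸ ht0min x hx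
    exact slm_eq hg (hmin_slm t htI htm) hslm0 hv
  obtain ⟨m, hbm⟩ := (hb.2 t0).1 hslm0
  subst hbm
  have hmi : m ≠ i := by
    intro hcon; rw [hcon] at hlt_i; exact lt_irrefl _ hlt_i
  have hmj : m ≠ j := by
    intro hcon; rw [hcon] at hlt_j; exact lt_irrefl _ hlt_j
  obtain ⟨ham0, ham1, ham2, ham3⟩ := aI_spec hg hb m
  obtain ⟨hcm0, hcm1, hcm2, hcm3⟩ := cI_spec hg hb m
  -- a_m < a_i
  have ham_lt : aI g b m < aI g b i := by
    have hub : ∀ r ∈ {r : ℝ | r < b m ∧ g r = g (b m)}, r ≤ aI g b i := by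
      rintro r ⟨hr1, hr2⟩
      by_contra hcon
      push_neg at hcon
      rcases le_or_gt r (cI g b i) with hr3 | hr3
      · have := exc_ge hg hb i r ⟨le_of_lt hcon, hr3⟩
        rw [hr2] at this
        linarith
      · have := huniq r ⟨le_of_lt hr3, le_of_lt (lt_of_lt_of_le hr1 ht0I.2.le)⟩ hr2
        rw [this] at hr1
        exact lt_irrefl _ hr1
    have hne : aI g b m ∈ {r : ℝ | r < b m ∧ g r = g (b m)} := ⟨ham1, ham2⟩
    have h1 : aI g b m ≤ aI g b i := hub _ hne
    rcases eq_or_lt_of_le h1 with h2 | h2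
    · exfalso
      have : g (aI g b m) = g (aI g b i) := by rw [h2]
      rw [ham2, hai2] at this
      rw [this] at hlt_i
      exact lt_irrefl _ hlt_i
    · exact h2
  -- c_m > c_j
  have hcm_gt : cI g b j < cI g b m := by
    have hlb : ∀ r ∈ {r : ℝ | b m < r ∧ g r = g (b m)}, cI g b j ≤ r := by
      rintro r ⟨hr1, hr2⟩
      by_contra hcon
      push_neg at hcon
      rcases le_or_gt r (aI g b j) with hr3 | hr3
      · have := huniq r ⟨le_of_lt (lt_of_le_of_lt ht0I.1.le hr1), hr3⟩ hr2
        rw [this] at hr1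
        exact lt_irrefl _ hr1
      · have := exc_ge hg hb j r ⟨le_of_lt hr3, le_of_lt hcon⟩
        rw [hr2] at this
        linarith
    have hne : cI g b m ∈ {r : ℝ | b m < r ∧ g r = g (b m)} := ⟨hcm0, hcm2⟩
    have h1 : cI g b j ≤ cI g b m := hlb _ hne
    rcases eq_or_lt_of_le h1 with h2 | h2
    · exfalso
      have : g (cI g b j) = g (cI g b m) := by rw [h2]
      rw [hcj2, hcm2] at this
      rw [← this] at hlt_j
      exact lt_irrefl _ hlt_j
    · exact h2
  refine ⟨m, hmi, hmj, ?_, ?_⟩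
  · intro t ht
    exact ⟨lt_of_lt_of_le ham_lt ht.1, lt_of_le_of_lt ht.2 ht0I.1⟩
  · intro t ht
    exact ⟨lt_of_lt_of_le ht0I.2 ht.1, lt_of_le_of_lt ht.2 hcm_gt⟩

/-- Non-strict disjointness of the shuffled intervals. -/
lemma D (hg : IsCRT g) (hb : IsEnum g b) {i j : ℕ} (hij : i ≠ j)
    (hdisj : Icc (aI g b i) (cI g b i) ∩ Icc (aI g b j) (cI g b j) = ∅) :
    cI' g b s i ≤ aI' g b s j ∨ cI' g b s j ≤ aI' g b s i := by
  obtain ⟨hai0, hai1, hai2, hai3⟩ := aI_spec hg hb i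
  obtain ⟨hci0, hci1, hci2, hci3⟩ := cI_spec hg hb i
  obtain ⟨haj0, haj1, haj2, haj3⟩ := aI_spec hg hb j
  obtain ⟨hcj0, hcj1, hcj2, hcj3⟩ := cI_spec hg hb j
  have hord : cI g b i < aI g b j ∨ cI g b j < aI g b i := by
    by_contra hcon
    push_neg at hcon
    have hx : max (aI g b i) (aI g b j) ∈ Icc (aI g b i) (cI g b i) ∩ Icc (aI g b j) (cI g b j) := by
      constructor
      · exact ⟨le_max_left _ _, max_le (by linarith) hcon.1⟩
      · exact ⟨le_max_right _ _, max_le hcon.2 (by linarith)⟩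
    rw [hdisj] at hx
    exact hx
  rcases hord with hord | hord
  · obtain ⟨m, hmi, hmj, hmsub1, hmsub2⟩ := ancestor hg hb hord
    rcases Bool.eq_false_or_eq_true (s m) with hsm | hsm
    · left
      have h1 := (N1 (s := s) hg hb hmsub1).2.2.1 hsm
      have h2 := (N2 (s := s) hg hb hmsub2).2.2.1 hsm
      linarith
    · right
      have h1 := (N1 (s := s) hg hb hmsub1).2.2.2 hsm
      have h2 := (N2 (s := s) hg hb hmsub2).2.2.2 hsm
      linarith
  · obtain ⟨m, hmj, hmi, hmsub1, hmsub2⟩ := ancestor hg hb hord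
    rcases Bool.eq_false_or_eq_true (s m) with hsm | hsm
    · right
      have h1 := (N1 (s := s) hg hb hmsub1).2.2.1 hsm
      have h2 := (N2 (s := s) hg hb hmsub2).2.2.1 hsm
      linarith
    · left
      have h1 := (N1 (s := s) hg hb hmsub1).2.2.2 hsm
      have h2 := (N2 (s := s) hg hb hmsub2).2.2.2 hsm
      linarith

lemma b'_bounds (hg : IsCRT g) (hb : IsEnum g b) (i : ℕ) :
    aI' g b s i < bI' g b s i ∧ bI' g b s i < cI' g b s i := by
  obtain ⟨hai0, hai1, hai2, hai3⟩ := aI_spec hg hb i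
  obtain ⟨hci0, hci1, hci2, hci3⟩ := cI_spec hg hb i
  rcases Bool.eq_false_or_eq_true (s i) with hsi | hsi
  · rw [bI'_true i hsi, cI'_def, aI'_def]
    constructor <;> linarith
  · rw [bI'_false i hsi, cI'_def, aI'_def]
    constructor <;> linarith

lemma len_pos' (hg : IsCRT g) (hb : IsEnum g b) (i : ℕ) :
    aI' g b s i < cI' g b s i :=
  lt_trans (b'_bounds hg hb i).1 (b'_bounds hg hb i).2

lemma extract (hg : IsCRT g) (hb : IsEnum g b) {i j : ℕ} (hval : g (b i) < g (b j))
    {P : ℕ → Prop}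
    (H : ∀ y ∈ Icc (g (b i)) (g (b j)), y ∈ closure {h | ∃ l, h = g (b l) ∧ P l}) :
    ∃ l, P l ∧ g (b i) < g (b l) ∧ g (b l) < g (b j) := by
  have hy : (g (b i) + g (b j))/2 ∈ Icc (g (b i)) (g (b j)) := ⟨by linarith, by linarith⟩
  have hcl := H _ hy
  rw [Metric.mem_closure_iff] at hcl
  obtain ⟨h, hhS, hdist⟩ := hcl ((g (b j) - g (b i))/2) (by linarith)
  obtain ⟨l, rfl, hPl⟩ := hhS
  rw [Real.dist_eq, abs_lt] at hdist
  exact ⟨l, hPl, by linarith [hdist.1, hdist.2], by linarith [hdist.1, hdist.2]⟩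

lemma side (hg : IsCRT g) (hb : IsEnum g b) {i l : ℕ} (hli : l ≠ i)
    (hsub : Icc (aI' g b s l) (cI' g b s l) ⊆ Icc (aI' g b s i) (cI' g b s i)) :
    Icc (aI g b l) (cI g b l) ⊆ Ioo (aI g b i) (b i) ∨
      Icc (aI g b l) (cI g b l) ⊆ Ioo (b i) (cI g b i) := by
  obtain ⟨hai0, hai1, hai2, hai3⟩ := aI_spec hg hb i
  obtain ⟨hci0, hci1, hci2, hci3⟩ := cI_spec hg hb i
  obtain ⟨hal0, hal1, hal2, hal3⟩ := aI_spec hg hb l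
  obtain ⟨hcl0, hcl1, hcl2, hcl3⟩ := cI_spec hg hb l
  have hlen_l : aI' g b s l < cI' g b s l := len_pos' hg hb l
  have hlen_i : aI' g b s i < cI' g b s i := len_pos' hg hb i
  obtain ⟨hsub1, hsub2⟩ := (Icc_subset_Icc_iff (le_of_lt hlen_l)).1 hsub
  rcases trichotomy hg hb (Ne.symm hli) with hc | hc | hc | hc | hc
  · exact Or.inl hc
  · exact Or.inr hc
  · exfalso
    obtain ⟨hN1, hN2, _, _⟩ := N1 (s := s) hg hb hc
    have he1 : aI' g b s l = aI' g b s i := le_antisymm hN1 hsub1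
    have he2 : cI' g b s l = cI' g b s i := le_antisymm hsub2 hN2
    have hlen : cI g b l - aI g b l = cI g b i - aI g b i := by
      have d1 : cI' g b s l = aI' g b s l + (cI g b l - aI g b l) := cI'_def l
      have d2 : cI' g b s i = aI' g b s i + (cI g b i - aI g b i) := cI'_def i
      rw [aI'_def, aI'_def] at *
      linarith
    have hci_in := hc ⟨le_of_lt (lt_trans hai1 hci0), le_rfl⟩
    have hai_in := hc ⟨le_rfl, le_of_lt (lt_trans hai1 hci0)⟩
    linarith [hci_in.2, hai_in.1, hcl0]
  · exfalso
    obtain ⟨hN1, hN2, _, _⟩ := N2 (s := s) hg hb hc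
    have he1 : aI' g b s l = aI' g b s i := le_antisymm hN1 hsub1
    have he2 : cI' g b s l = cI' g b s i := le_antisymm hsub2 hN2
    have hlen : cI g b l - aI g b l = cI g b i - aI g b i := by
      have d1 : cI' g b s l = aI' g b s l + (cI g b l - aI g b l) := cI'_def l
      have d2 : cI' g b s i = aI' g b s i + (cI g b i - aI g b i) := cI'_def i
      rw [aI'_def, aI'_def] at *
      linarith
    have hci_in := hc ⟨le_of_lt (lt_trans hai1 hci0), le_rfl⟩
    have hai_in := hc ⟨le_rfl, le_of_lt (lt_trans hai1 hci0)⟩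
    linarith [hci_in.2, hai_in.1, hal1]
  · exfalso
    rcases D (s := s) hg hb (Ne.symm hli) hc with hd | hd
    · linarith
    · linarith

lemma S1 (hg : IsCRT g) (hb : IsEnum g b) (hA : PropA g b s) {i j : ℕ}
    (h : Icc (aI g b j) (cI g b j) ⊆ Ioo (aI g b i) (b i)) :
    (s i = true → Icc (aI' g b s j) (cI' g b s j) ⊆ Ioo (aI' g b s i) (bI' g b s i)) ∧
    (s i = false → Icc (aI' g b s j) (cI' g b s j) ⊆ Ioo (bI' g b s i) (cI' g b s i)) := by
  obtain ⟨hai0, hai1, hai2, hai3⟩ := aI_spec hg hb i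
  obtain ⟨haj0, haj1, haj2, haj3⟩ := aI_spec hg hb j
  obtain ⟨hcj0, hcj1, hcj2, hcj3⟩ := cI_spec hg hb j
  have hajcj : aI g b j ≤ cI g b j := le_of_lt (lt_trans haj1 hcj0)
  have hij : i ≠ j := by
    intro he
    subst he
    exact lt_irrefl _ (h ⟨le_rfl, hajcj⟩).1
  have hbj := h ⟨le_of_lt haj1, le_of_lt hcj0⟩
  have hval : g (b i) < g (b j) := hai3 _ hbj.1 hbj.2
  obtain ⟨hN1, hN2, hN3, hN4⟩ := N1 (s := s) hg hb h
  have hsub' : Icc (aI' g b s j) (cI' g b s j) ⊆ Icc (aI' g b s i) (cI' g b s i) :=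
    Icc_subset_Icc hN1 hN2
  obtain ⟨H1, H2⟩ := hA i j hij hsub'
  obtain ⟨l₁, ⟨hl₁sub, hl₁j⟩, hl₁lo, hl₁hi⟩ := extract hg hb hval H1
  obtain ⟨l₂, ⟨hl₂sub, hl₂j⟩, hl₂lo, hl₂hi⟩ := extract hg hb hval H2
  have hl₁i : l₁ ≠ i := fun he => by rw [he] at hl₁lo; exact lt_irrefl _ hl₁lo
  have hl₂i : l₂ ≠ i := fun he => by rw [he] at hl₂lo; exact lt_irrefl _ hl₂lo
  have hjlen : aI' g b s j < cI' g b s j := len_pos' hg hb j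
  obtain ⟨hb₁l, hb₁r⟩ := b'_bounds (s := s) hg hb l₁
  obtain ⟨hb₂l, hb₂r⟩ := b'_bounds (s := s) hg hb l₂
  obtain ⟨hq₁1, hq₁2⟩ := (Icc_subset_Icc_iff (le_of_lt (len_pos' (s := s) hg hb l₁))).1 hl₁sub
  obtain ⟨hq₂1, hq₂2⟩ := (Icc_subset_Icc_iff (le_of_lt (len_pos' (s := s) hg hb l₂))).1 hl₂sub
  obtain ⟨hr₁1, hr₁2⟩ := (Icc_subset_Icc_iff (le_of_lt hjlen)).1 hl₁j
  obtain ⟨hr₂1, hr₂2⟩ := (Icc_subset_Icc_iff (le_of_lt hjlen)).1 hl₂j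
  constructor
  · intro hsi
    have hstrl : aI' g b s i < aI' g b s j := by linarith
    have hstrr : cI' g b s j < bI' g b s i := by
      rcases side hg hb hl₂i hl₂sub with hcs | hcs
      · have := (N1 (s := s) hg hb hcs).2.2.1 hsi
        linarith
      · have := (N2 (s := s) hg hb hcs).2.2.1 hsi
        have h3 := hN3 hsi
        linarith
    intro x hx
    exact ⟨lt_of_lt_of_le hstrl hx.1, lt_of_le_of_lt hx.2 hstrr⟩
  · intro hsi
    have hstrl : bI' g b s i < aI' g b s j := by
      rcases side hg hb hl₁i hl₁sub with hcs | hcs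
      · have := (N1 (s := s) hg hb hcs).2.2.2 hsi
        linarith
      · have := (N2 (s := s) hg hb hcs).2.2.2 hsi
        have h4 := hN4 hsi
        linarith
    have hstrr : cI' g b s j < cI' g b s i := by linarith
    intro x hx
    exact ⟨lt_of_lt_of_le hstrl hx.1, lt_of_le_of_lt hx.2 hstrr⟩

lemma S2 (hg : IsCRT g) (hb : IsEnum g b) (hA : PropA g b s) {i j : ℕ}
    (h : Icc (aI g b j) (cI g b j) ⊆ Ioo (b i) (cI g b i)) :
    (s i = true → Icc (aI' g b s j) (cI' g b s j) ⊆ Ioo (bI' g b s i) (cI' g b s i)) ∧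
    (s i = false → Icc (aI' g b s j) (cI' g b s j) ⊆ Ioo (aI' g b s i) (bI' g b s i)) := by
  obtain ⟨hci0, hci1, hci2, hci3⟩ := cI_spec hg hb i
  obtain ⟨haj0, haj1, haj2, haj3⟩ := aI_spec hg hb j
  obtain ⟨hcj0, hcj1, hcj2, hcj3⟩ := cI_spec hg hb j
  have hajcj : aI g b j ≤ cI g b j := le_of_lt (lt_trans haj1 hcj0)
  have hij : i ≠ j := by
    intro he
    subst he
    exact lt_irrefl _ (h ⟨hajcj, le_rfl⟩).2
  have hbj := h ⟨le_of_lt haj1, le_of_lt hcj0⟩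
  have hval : g (b i) < g (b j) := hci3 _ hbj.1 hbj.2
  obtain ⟨hN1, hN2, hN3, hN4⟩ := N2 (s := s) hg hb h
  have hsub' : Icc (aI' g b s j) (cI' g b s j) ⊆ Icc (aI' g b s i) (cI' g b s i) :=
    Icc_subset_Icc hN1 hN2
  obtain ⟨H1, H2⟩ := hA i j hij hsub'
  obtain ⟨l₁, ⟨hl₁sub, hl₁j⟩, hl₁lo, hl₁hi⟩ := extract hg hb hval H1
  obtain ⟨l₂, ⟨hl₂sub, hl₂j⟩, hl₂lo, hl₂hi⟩ := extract hg hb hval H2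
  have hl₁i : l₁ ≠ i := fun he => by rw [he] at hl₁lo; exact lt_irrefl _ hl₁lo
  have hl₂i : l₂ ≠ i := fun he => by rw [he] at hl₂lo; exact lt_irrefl _ hl₂lo
  have hjlen : aI' g b s j < cI' g b s j := len_pos' hg hb j
  obtain ⟨hb₁l, hb₁r⟩ := b'_bounds (s := s) hg hb l₁
  obtain ⟨hb₂l, hb₂r⟩ := b'_bounds (s := s) hg hb l₂
  obtain ⟨hq₁1, hq₁2⟩ := (Icc_subset_Icc_iff (le_of_lt (len_pos' (s := s) hg hb l₁))).1 hl₁sub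
  obtain ⟨hq₂1, hq₂2⟩ := (Icc_subset_Icc_iff (le_of_lt (len_pos' (s := s) hg hb l₂))).1 hl₂sub
  obtain ⟨hr₁1, hr₁2⟩ := (Icc_subset_Icc_iff (le_of_lt hjlen)).1 hl₁j
  obtain ⟨hr₂1, hr₂2⟩ := (Icc_subset_Icc_iff (le_of_lt hjlen)).1 hl₂j
  constructor
  · intro hsi
    have hstrl : bI' g b s i < aI' g b s j := by
      rcases side hg hb hl₁i hl₁sub with hcs | hcs
      · have := (N1 (s := s) hg hb hcs).2.2.1 hsi
        have h3 := hN3 hsi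
        linarith
      · have := (N2 (s := s) hg hb hcs).2.2.1 hsi
        linarith
    have hstrr : cI' g b s j < cI' g b s i := by linarith
    intro x hx
    exact ⟨lt_of_lt_of_le hstrl hx.1, lt_of_le_of_lt hx.2 hstrr⟩
  · intro hsi
    have hstrl : aI' g b s i < aI' g b s j := by linarith
    have hstrr : cI' g b s j < bI' g b s i := by
      rcases side hg hb hl₂i hl₂sub with hcs | hcs
      · have := (N1 (s := s) hg hb hcs).2.2.2 hsi
        have h4 := hN4 hsi
        linarith
      · have := (N2 (s := s) hg hb hcs).2.2.2 hsi
        linarith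
    intro x hx
    exact ⟨lt_of_lt_of_le hstrl hx.1, lt_of_le_of_lt hx.2 hstrr⟩

end Work

open Work

/-- Under property (A), the nesting of shuffled intervals is strict. -/
theorem stmt11 (g : ℝ → ℝ) (hg : IsCRT g) (b : ℕ → ℝ) (hb : IsEnum g b) (s : ℕ → Bool)
    (hA : PropA g b s) (i j : ℕ) (hij : i ≠ j) :
    (Set.Icc (aI g b j) (cI g b j) ⊆ Set.Ioo (aI g b i) (b i) →
      (s i = true → Set.Icc (aI' g b s j) (cI' g b s j) ⊆ Set.Ioo (aI' g b s i) (bI' g b s i)) ∧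
      (s i = false → Set.Icc (aI' g b s j) (cI' g b s j) ⊆ Set.Ioo (bI' g b s i) (cI' g b s i))) ∧
    (Set.Icc (aI g b j) (cI g b j) ⊆ Set.Ioo (b i) (cI g b i) →
      (s i = true → Set.Icc (aI' g b s j) (cI' g b s j) ⊆ Set.Ioo (bI' g b s i) (cI' g b s i)) ∧
      (s i = false → Set.Icc (aI' g b s j) (cI' g b s j) ⊆ Set.Ioo (aI' g b s i) (bI' g b s i))) ∧
    (Set.Icc (aI g b i) (cI g b i) ∩ Set.Icc (aI g b j) (cI g b j) = ∅ →
      Set.Icc (aI' g b s i) (cI' g b s i) ∩ Set.Icc (aI' g b s j) (cI' g b s j) = ∅) := by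
  refine ⟨fun h => S1 hg hb hA h, fun h => S2 hg hb hA h, fun hdisj => ?_⟩
  obtain ⟨hai0, hai1, hai2, hai3⟩ := aI_spec hg hb i
  obtain ⟨hci0, hci1, hci2, hci3⟩ := cI_spec hg hb i
  obtain ⟨haj0, haj1, haj2, haj3⟩ := aI_spec hg hb j
  obtain ⟨hcj0, hcj1, hcj2, hcj3⟩ := cI_spec hg hb j
  have hord : cI g b i < aI g b j ∨ cI g b j < aI g b i := by
    by_contra hcon
    push_neg at hcon
    have hx : max (aI g b i) (aI g b j) ∈
        Icc (aI g b i) (cI g b i) ∩ Icc (aI g b j) (cI g b j) := by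
      constructor
      · exact ⟨le_max_left _ _, max_le (by linarith) hcon.1⟩
      · exact ⟨le_max_right _ _, max_le hcon.2 (by linarith)⟩
    rw [hdisj] at hx
    exact hx
  have hilen : aI' g b s i ≤ cI' g b s i := le_of_lt (len_pos' hg hb i)
  have hjlen : aI' g b s j ≤ cI' g b s j := le_of_lt (len_pos' hg hb j)
  apply eq_empty_iff_forall_notMem.2
  rintro x ⟨hx1, hx2⟩
  rcases hord with hord | hord
  · obtain ⟨m, hmi, hmj, hm1, hm2⟩ := ancestor hg hb hord
    rcases Bool.eq_false_or_eq_true (s m) with hsm | hsm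
    · have hstr := (S1 hg hb hA hm1).1 hsm
      have hlt : cI' g b s i < bI' g b s m := (hstr ⟨hilen, le_rfl⟩).2
      have hle := (N2 (s := s) hg hb hm2).2.2.1 hsm
      linarith [hx1.2, hx2.1]
    · have hstr := (S2 hg hb hA hm2).2 hsm
      have hlt : cI' g b s j < bI' g b s m := (hstr ⟨hjlen, le_rfl⟩).2
      have hle := (N1 (s := s) hg hb hm1).2.2.2 hsm
      linarith [hx1.1, hx2.2]
  · obtain ⟨m, hmj, hmi, hm1, hm2⟩ := ancestor hg hb hord
    rcases Bool.eq_false_or_eq_true (s m) with hsm | hsm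
    · have hstr := (S1 hg hb hA hm1).1 hsm
      have hlt : cI' g b s j < bI' g b s m := (hstr ⟨hjlen, le_rfl⟩).2
      have hle := (N2 (s := s) hg hb hm2).2.2.1 hsm
      linarith [hx1.1, hx2.2]
    · have hstr := (S2 hg hb hA hm2).2 hsm
      have hlt : cI' g b s i < bI' g b s m := (hstr ⟨hilen, le_rfl⟩).2
      have hle := (N1 (s := s) hg hb hm1).2.2.2 hsm
      linarith [hx1.2, hx2.1]

end
end
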